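/- arXiv:1609.08815 — 9 statements merged into one kernel-verified Lean document; each statement's English description precedes it below -/
import Mathlib

section
/- Let G be a finite group with subgroups A and B such that G = AB, and let K be a subgroup of B. If A permutes with K^b (i.e., A·K^b = K^b·A as sets) for all b ∈ B, then A permutes with K^x for all x ∈ G. -/
open Subgroup Pointwise

variable {G : Type*}

/-- The conjugate subgroup `K ^ x = x⁻¹ K x`. -/
def sconj [Group G] (x : G) (K : Subgroup G) : Subgroup G :=
  K.map (MulAut.conj x⁻¹).toMonoidHom

/-- Two subgroups permute if `AB = BA` as subsets. -/
def permutes [Group G] (A B : Subgroup G) : Prop :=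
  (A : Set G) * (B : Set G) = (B : Set G) * (A : Set G)

/-- `H/K` is a chief factor of `G`. -/
def IsChiefFactor [Group G] (K H : Subgroup G) : Prop :=
  K.Normal ∧ H.Normal ∧ K < H ∧ ∀ N : Subgroup G, N.Normal → K < N → N ≤ H → N = H

/-- The factor `H/K` is cyclic (generated by a single coset). -/
def CyclicFactor [Group G] (K H : Subgroup G) : Prop :=
  ∃ g ∈ H, ∀ h ∈ H, ∃ n : ℤ, (g ^ n)⁻¹ * h ∈ K

/-- A group is `p`-soluble if every chief factor is a `p`-group or a `p'`-group. -/
def pSoluble (p : ℕ) (X : Type*) [Group X] : Prop :=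
  ∀ K H : Subgroup X, IsChiefFactor K H →
    (∃ n : ℕ, (K.subgroupOf H).index = p ^ n) ∨ ¬ p ∣ (K.subgroupOf H).index

/-- `p`-supersoluble: `p`-soluble and chief factors of order divisible by `p` have order `p`. -/
def pSupersoluble (p : ℕ) (X : Type*) [Group X] : Prop :=
  pSoluble p X ∧ ∀ K H : Subgroup X, IsChiefFactor K H →
    p ∣ (K.subgroupOf H).index → (K.subgroupOf H).index = p

/-- A Hall `s`-subgroup: its order involves only primes in `s`, its index none. -/
def IsHallSigmaSubgroup {X : Type*} [Group X] (s : Set ℕ) (H : Subgroup X) : Prop :=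
  (∀ q : ℕ, q.Prime → q ∣ Nat.card H → q ∈ s) ∧
    ∀ q : ℕ, q.Prime → q ∣ H.index → q ∉ s

/-- `σ` is a partition of the set of all primes. -/
def IsPrimePartition {ι : Type*} (σ : ι → Set ℕ) : Prop :=
  (∀ i, ∀ q ∈ σ i, Nat.Prime q) ∧ ∀ q : ℕ, q.Prime → ∃! i, q ∈ σ i

/-- `ℋ` (with labelling `j`) is a complete Hall `σ`-set. -/
def IsCompleteHallSigmaSet {X : Type*} [Group X] {ι : Type*} (σ : ι → Set ℕ)
    {t : ℕ} (ℋ : Fin t → Subgroup X) (j : Fin t → ι) : Prop :=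
  Function.Injective j ∧ (∀ i, IsHallSigmaSubgroup (σ (j i)) (ℋ i)) ∧
    ∀ a : ι, (∃ q : ℕ, q.Prime ∧ q ∈ σ a ∧ q ∣ Nat.card X) → ∃ i, j i = a

/-- `H` is σ-semipermutable with respect to `ℋ`. -/
def SigmaSemipermutable {X : Type*} [Group X] {t : ℕ} (H : Subgroup X)
    (ℋ : Fin t → Subgroup X) : Prop :=
  ∀ i : Fin t, Nat.Coprime (Nat.card H) (Nat.card (ℋ i)) →
    ∀ x : X, permutes H (sconj x (ℋ i))

/-- `E/O ≤ Z_∞(G/O)`: there is an ascending chain from `O` which is central over `O`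
and covers `E`. -/
def LeHypercenterOver [Group G] (O E : Subgroup G) : Prop :=
  ∃ n : ℕ, ∃ Z : ℕ → Subgroup G, Z 0 = O ∧ E ≤ Z n ∧
    ∀ i < n, Z i ≤ Z (i + 1) ∧ ∀ z ∈ Z (i + 1), ∀ g : G, z * g * z⁻¹ * g⁻¹ ∈ Z i

/-- `p`-nilpotent: has a normal `p`-complement. -/
def pNilpotent (p : ℕ) (X : Type*) [Group X] : Prop :=
  ∃ N : Subgroup X, N.Normal ∧ ¬ p ∣ Nat.card N ∧
    ∀ q : ℕ, q.Prime → q ∣ N.index → q = p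

/-- `O_{p'}(E)`, the largest normal `p'`-subgroup of `E`, as a subgroup of `G`. -/
def OpPrime (p : ℕ) [Group G] (E : Subgroup G) : Subgroup G :=
  ⨆ N ∈ {N : Subgroup G | N ≤ E ∧ (N.subgroupOf E).Normal ∧ ¬ p ∣ Nat.card N}, N

/-- `O_π(X)`, the largest normal `π`-subgroup. -/
def Oset (π : Set ℕ) (X : Type*) [Group X] : Subgroup X :=
  ⨆ N ∈ {N : Subgroup X | N.Normal ∧ ∀ q : ℕ, q.Prime → q ∣ Nat.card N → q ∈ π}, N

/-- The Fitting subgroup: join of all normal nilpotent subgroups. -/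
def FittingSub (X : Type*) [Group X] : Subgroup X :=
  ⨆ N ∈ {N : Subgroup X | N.Normal ∧ Group.IsNilpotent N}, N

/-- `G/C` is strictly `p`-closed (stated internally in `G`, over the subgroup `C`). -/
def StrictlyPClosedOver [Group G] (p : ℕ) (C : Subgroup G) : Prop :=
  ∃ S : Subgroup G, C ≤ S ∧ S.Normal ∧ (∀ s ∈ S, ∃ n : ℕ, s ^ p ^ n ∈ C) ∧
    ¬ p ∣ S.index ∧ (∀ a b : G, a * b * a⁻¹ * b⁻¹ ∈ S) ∧ ∀ a : G, a ^ (p - 1) ∈ S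


lemma sconj_coe [Group G] (x : G) (K : Subgroup G) :
    ((sconj x K : Subgroup G) : Set G) = {x⁻¹} * (K : Set G) * {x} := by
  ext g
  simp only [sconj, Subgroup.coe_map, Set.mem_image, Set.mem_mul,
    Set.mem_singleton_iff, SetLike.mem_coe]
  constructor
  · rintro ⟨k, hk, rfl⟩
    exact ⟨_, ⟨x⁻¹, rfl, k, hk, rfl⟩, x, rfl, by simp [MulAut.conj]⟩
  · rintro ⟨_, ⟨_, rfl, k, hk, rfl⟩, _, rfl, rfl⟩
    exact ⟨k, hk, by simp [MulAut.conj]⟩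

lemma coe_mul_singleton [Group G] {A : Subgroup G} {a : G} (ha : a ∈ A) :
    (A : Set G) * {a} = (A : Set G) := by
  ext g
  simp only [Set.mem_mul, Set.mem_singleton_iff, SetLike.mem_coe]
  constructor
  · rintro ⟨y, hy, _, rfl, rfl⟩; exact A.mul_mem hy ha
  · intro hg; exact ⟨g * a⁻¹, A.mul_mem hg (A.inv_mem ha), a, rfl, by group⟩

lemma singleton_mul_coe [Group G] {A : Subgroup G} {a : G} (ha : a ∈ A) :
    ({a} : Set G) * A = (A : Set G) := by
  ext g
  simp only [Set.mem_mul, Set.mem_singleton_iff, SetLike.mem_coe]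
  constructor
  · rintro ⟨_, rfl, y, hy, rfl⟩; exact A.mul_mem ha hy
  · intro hg; exact ⟨a, rfl, a⁻¹ * g, A.mul_mem (A.inv_mem ha) hg, by group⟩

/-- If `G = AB`, `K ≤ B` and `A` permutes with `K^b` for all `b ∈ B`,
then `A` permutes with `K^x` for all `x ∈ G`. -/
theorem stmt0 [Group G] [Finite G] (A B K : Subgroup G)
    (hG : (A : Set G) * (B : Set G) = Set.univ) (hKB : K ≤ B)
    (h : ∀ b ∈ B, permutes A (sconj b K)) :
    ∀ x : G, permutes A (sconj x K) := by
  intro x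
  have hx : x⁻¹ ∈ (A : Set G) * (B : Set G) := by rw [hG]; trivial
  obtain ⟨a, ha, b, hb, hab0⟩ := hx
  have hab : a * b = x⁻¹ := hab0
  have hS : permutes A (sconj b⁻¹ K) := h b⁻¹ (B.inv_mem hb)
  set S : Set G := ((sconj b⁻¹ K : Subgroup G) : Set G) with hSdef
  have hdecomp : ((sconj x K : Subgroup G) : Set G) = {a} * S * {a⁻¹} := by
    rw [sconj_coe, hSdef, sconj_coe]
    have hx1 : ({x⁻¹} : Set G) = {a} * ({b⁻¹⁻¹} : Set G) := by
      rw [Set.singleton_mul_singleton, inv_inv, hab]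
    have hx2 : ({x} : Set G) = ({b⁻¹} : Set G) * {a⁻¹} := by
      rw [Set.singleton_mul_singleton]
      congr 1
      rw [← mul_inv_rev, hab, inv_inv]
    rw [hx1, hx2]
    simp only [mul_assoc]
  unfold permutes at hS ⊢
  rw [hdecomp]
  calc (A : Set G) * ({a} * S * {a⁻¹})
      = (A : Set G) * {a} * S * {a⁻¹} := by simp only [mul_assoc]
    _ = (A : Set G) * S * {a⁻¹} := by rw [coe_mul_singleton ha]
    _ = S * (A : Set G) * {a⁻¹} := by rw [hS]
    _ = S * ((A : Set G) * {a⁻¹}) := by simp only [mul_assoc]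
    _ = S * (A : Set G) := by rw [coe_mul_singleton (A.inv_mem ha)]
    _ = (A : Set G) * S := hS.symm
    _ = {a} * (A : Set G) * S := by rw [singleton_mul_coe ha]
    _ = {a} * ((A : Set G) * S) := by rw [mul_assoc]
    _ = {a} * (S * (A : Set G)) := by rw [hS]
    _ = {a} * S * (A : Set G) := by rw [mul_assoc]
    _ = {a} * S * ({a⁻¹} * (A : Set G)) := by rw [singleton_mul_coe (A.inv_mem ha)]
    _ = {a} * S * {a⁻¹} * (A : Set G) := by simp only [mul_assoc]
end

section
/- Let G be a finite group with subgroups A and B such that G = AB, and let K be a subgroup of B. If A permutes with K^b for all b ∈ B, then A^x permutes with K for all x ∈ G. -/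
open Subgroup Pointwise

variable {G : Type*}

lemma sconj_sconj [Group G] (a b : G) (K : Subgroup G) :
    sconj a (sconj b K) = sconj (b * a) K := by
  unfold sconj
  rw [Subgroup.map_map]
  congr 1
  ext y
  simp [mul_assoc]

lemma sconj_self [Group G] {a : G} {A : Subgroup G} (ha : a ∈ A) : sconj a A = A := by
  ext y
  simp only [sconj, Subgroup.mem_map, MulEquiv.coe_toMonoidHom, MulAut.conj_apply, inv_inv]
  constructor
  · rintro ⟨z, hz, rfl⟩
    exact A.mul_mem (A.mul_mem (A.inv_mem ha) hz) ha
  · intro hy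
    exact ⟨a * y * a⁻¹, A.mul_mem (A.mul_mem ha hy) (A.inv_mem ha), by group⟩

lemma permutes_sconj [Group G] {A K : Subgroup G} (g : G) (h : permutes A K) :
    permutes (sconj g A) (sconj g K) := by
  unfold permutes sconj at *
  simp only [Subgroup.coe_map]
  rw [← Set.image_mul, ← Set.image_mul, h]

/-- If `G = AB`, `K ≤ B` and `A` permutes with `K^b` for all `b ∈ B`,
then `A^x` permutes with `K` for all `x ∈ G`. -/
theorem stmt1 [Group G] [Finite G] (A B K : Subgroup G)
    (hG : (A : Set G) * (B : Set G) = Set.univ) (hKB : K ≤ B)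
    (h : ∀ b ∈ B, permutes A (sconj b K)) :
    ∀ x : G, permutes (sconj x A) K := by
  intro x
  have hx : x ∈ (A : Set G) * (B : Set G) := by rw [hG]; trivial
  obtain ⟨a, ha, b, hb, rfl⟩ := hx
  have h1 : permutes A (sconj b⁻¹ K) := h b⁻¹ (B.inv_mem hb)
  have h2 := permutes_sconj b h1
  rw [sconj_sconj, inv_mul_cancel] at h2
  have h3 : sconj b⁻¹ K = K.map (MulAut.conj b⁻¹⁻¹).toMonoidHom := rfl
  rw [show sconj (1 : G) K = K by ext y; simp [sconj]] at h2
  have : sconj (a * b) A = sconj b A := by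
    rw [← sconj_sconj, sconj_self ha]
  rw [this]
  exact h2
end

section
/- (Kegel) Let A and B be subgroups of a finite group G such that G ≠ AB and A permutes with B^x for all x ∈ G. Then G has a proper normal subgroup N such that either A ≤ N or B ≤ N. -/
open Subgroup Pointwise

variable {G : Type*}

section helpers

variable [Group G]

lemma mem_sconj {B : Subgroup G} {u x : G} : x ∈ sconj u B ↔ u * x * u⁻¹ ∈ B := by
  simp only [sconj, Subgroup.mem_map, MulEquiv.coe_toMonoidHom, MulAut.conj_apply]
  constructor
  · rintro ⟨b, hb, rfl⟩
    simpa [mul_assoc] using hb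
  · intro hx
    exact ⟨u * x * u⁻¹, hx, by group⟩

lemma sconj_one (B : Subgroup G) : sconj (1 : G) B = B := by
  ext x; simp [mem_sconj]

lemma sconj_sconj_s2 (x y : G) (B : Subgroup G) : sconj y (sconj x B) = sconj (x * y) B := by
  ext z
  simp only [mem_sconj]
  rw [show x * (y * z * y⁻¹) * x⁻¹ = x * y * z * (x * y)⁻¹ by group]

lemma sconj_self_mem {K : Subgroup G} {c : G} (hc : c ∈ K) : sconj c K = K := by
  ext x
  rw [mem_sconj]
  constructor
  · intro h
    have := mul_mem (mul_mem (inv_mem hc) h) hc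
    simpa [mul_assoc] using this
  · intro h
    exact mul_mem (mul_mem hc h) (inv_mem hc)

lemma sconj_le_of_le {K W : Subgroup G} {a : G} (h : K ≤ W) (ha : a ∈ W) :
    sconj a K ≤ W := by
  intro x hx
  rw [mem_sconj] at hx
  have := mul_mem (mul_mem (inv_mem ha) (h hx)) ha
  simpa [mul_assoc] using this

lemma card_sconj (u : G) (B : Subgroup G) : Nat.card (sconj u B) = Nat.card B :=
  (Nat.card_congr (MulEquiv.subgroupMap (MulAut.conj u⁻¹) B).toEquiv).symm

lemma sconj_iSup {ι : Sort*} (u : G) (f : ι → Subgroup G) :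
    sconj u (⨆ i, f i) = ⨆ i, sconj u (f i) :=
  (Subgroup.gc_map_comap _).l_iSup

lemma sconj_sup (u : G) (B C : Subgroup G) :
    sconj u (B ⊔ C) = sconj u B ⊔ sconj u C :=
  (Subgroup.gc_map_comap _).l_sup

lemma sconj_cancel (u : G) (B : Subgroup G) : sconj u⁻¹ (sconj u B) = B := by
  rw [sconj_sconj_s2, mul_inv_cancel, sconj_one]

lemma sconj_top (u : G) : sconj u (⊤ : Subgroup G) = ⊤ := by
  ext x; simp [mem_sconj]

lemma coe_sconj (u : G) (B : Subgroup G) :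
    (sconj u B : Set G) = (⇑(MulAut.conj u⁻¹) : G → G) '' (B : Set G) := by
  rfl

end helpers

section helpers2

variable [Group G]

lemma coe_sup_of_permute {H K : Subgroup G}
    (h : (H : Set G) * (K : Set G) = (K : Set G) * (H : Set G)) :
    ((H ⊔ K : Subgroup G) : Set G) = (H : Set G) * (K : Set G) := by
  let P : Subgroup G :=
    { carrier := (H : Set G) * (K : Set G)
      one_mem' := ⟨1, H.one_mem, 1, K.one_mem, one_mul 1⟩
      mul_mem' := by
        rintro a b ⟨h₁, hh₁, k₁, hk₁, rfl⟩ ⟨h₂, hh₂, k₂, hk₂, rfl⟩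
        have hm : k₁ * h₂ ∈ (K : Set G) * (H : Set G) := ⟨k₁, hk₁, h₂, hh₂, rfl⟩
        rw [← h] at hm
        obtain ⟨h₃, hh₃, k₃, hk₃, he⟩ := hm
        have he' : h₃ * k₃ = k₁ * h₂ := he
        refine ⟨h₁ * h₃, mul_mem hh₁ hh₃, k₃ * k₂, mul_mem hk₃ hk₂, ?_⟩
        calc h₁ * h₃ * (k₃ * k₂) = h₁ * (h₃ * k₃) * k₂ := by group
          _ = h₁ * (k₁ * h₂) * k₂ := by rw [he']
          _ = h₁ * k₁ * (h₂ * k₂) := by group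
      inv_mem' := by
        rintro a ⟨h₁, hh₁, k₁, hk₁, rfl⟩
        have hm : k₁⁻¹ * h₁⁻¹ ∈ (K : Set G) * (H : Set G) :=
          ⟨k₁⁻¹, inv_mem hk₁, h₁⁻¹, inv_mem hh₁, rfl⟩
        rw [← h] at hm
        simpa [mul_inv_rev] using hm }
  have hP : (P : Set G) = (H : Set G) * (K : Set G) := rfl
  have h1 : H ⊔ K ≤ P := by
    refine sup_le ?_ ?_
    · intro x hx
      have : x ∈ (P : Set G) := hP ▸ ⟨x, hx, 1, K.one_mem, mul_one x⟩
      exact this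
    · intro x hx
      have : x ∈ (P : Set G) := hP ▸ ⟨1, H.one_mem, x, hx, one_mul x⟩
      exact this
  refine Set.Subset.antisymm ?_ ?_
  · intro x hx
    exact hP ▸ (h1 hx)
  · rintro _ ⟨h₁, hh₁, k₁, hk₁, rfl⟩
    exact mul_mem (le_sup_left (a := H) (b := K) hh₁) (le_sup_right (a := H) (b := K) hk₁)

lemma permute_iSup_left {ι : Sort*} (f : ι → Subgroup G) (K : Subgroup G)
    (h : ∀ i, ((f i : Set G) * (K : Set G) = (K : Set G) * (f i : Set G))) :
    ((⨆ i, f i : Subgroup G) : Set G) * (K : Set G)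
      = (K : Set G) * ((⨆ i, f i : Subgroup G) : Set G) := by
  apply Set.Subset.antisymm
  · rintro _ ⟨x, hx, k, hk, rfl⟩
    have hx' : x ∈ ⨆ i, f i := hx
    refine Subgroup.iSup_induction f
      (C := fun x => ∀ k ∈ K, x * k ∈ (K : Set G) * ((⨆ i, f i : Subgroup G) : Set G))
      hx' ?_ ?_ ?_ k hk
    · intro i x hxi k hk
      have : x * k ∈ (K : Set G) * (f i : Set G) := by
        rw [← h i]; exact ⟨x, hxi, k, hk, rfl⟩
      obtain ⟨k', hk', y, hy, he⟩ := this
      exact ⟨k', hk', y, (le_iSup f i : f i ≤ _) hy, he⟩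
    · intro k hk
      exact ⟨k, hk, 1, OneMemClass.one_mem _, by simp⟩
    · intro x y hx hy k hk
      obtain ⟨k₁, hk₁, y₁, hy₁, he₁⟩ := hy k hk
      obtain ⟨k₂, hk₂, x₁, hx₁, he₂⟩ := hx k₁ hk₁
      have he₁' : k₁ * y₁ = y * k := he₁
      have he₂' : k₂ * x₁ = x * k₁ := he₂
      refine ⟨k₂, hk₂, x₁ * y₁, mul_mem hx₁ hy₁, ?_⟩
      calc k₂ * (x₁ * y₁) = (k₂ * x₁) * y₁ := by group
        _ = x * (k₁ * y₁) := by rw [he₂']; group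
        _ = x * (y * k) := by rw [he₁']
        _ = x * y * k := by group
  · rintro _ ⟨k, hk, x, hx, rfl⟩
    have hx' : x ∈ ⨆ i, f i := hx
    refine Subgroup.iSup_induction f
      (C := fun x => ∀ k ∈ K, k * x ∈ ((⨆ i, f i : Subgroup G) : Set G) * (K : Set G))
      hx' ?_ ?_ ?_ k hk
    · intro i x hxi k hk
      have : k * x ∈ (f i : Set G) * (K : Set G) := by
        rw [h i]; exact ⟨k, hk, x, hxi, rfl⟩
      obtain ⟨y, hy, k', hk', he⟩ := this
      exact ⟨y, (le_iSup f i : f i ≤ _) hy, k', hk', he⟩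
    · intro k hk
      exact ⟨1, OneMemClass.one_mem _, k, hk, by simp⟩
    · intro x y hx hy k hk
      obtain ⟨x₁, hx₁, k₁, hk₁, he₁⟩ := hx k hk
      obtain ⟨y₁, hy₁, k₂, hk₂, he₂⟩ := hy k₁ hk₁
      have he₁' : x₁ * k₁ = k * x := he₁
      have he₂' : y₁ * k₂ = k₁ * y := he₂
      refine ⟨x₁ * y₁, mul_mem hx₁ hy₁, k₂, hk₂, ?_⟩
      calc x₁ * y₁ * k₂ = x₁ * (y₁ * k₂) := by group
        _ = x₁ * (k₁ * y) := by rw [he₂']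
        _ = (x₁ * k₁) * y := by group
        _ = k * x * y := by rw [he₁']
        _ = k * (x * y) := by group

lemma perm_joins {A B : Subgroup G}
    (h' : ∀ u v : G, ((sconj u A : Set G)) * ((sconj v B : Set G))
      = ((sconj v B : Set G)) * ((sconj u A : Set G)))
    {ιa ιb : Sort*} (p : ιa → G) (q : ιb → G) :
    ((⨆ i, sconj (p i) A : Subgroup G) : Set G) * ((⨆ j, sconj (q j) B : Subgroup G) : Set G)
      = ((⨆ j, sconj (q j) B : Subgroup G) : Set G)
        * ((⨆ i, sconj (p i) A : Subgroup G) : Set G) := by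
  apply permute_iSup_left
  intro i
  exact (permute_iSup_left (fun j => sconj (q j) B) (sconj (p i) A)
    (fun j => (h' (p i) (q j)).symm)).symm

lemma h'_of_h {A B : Subgroup G} (h : ∀ x : G, permutes A (sconj x B)) (u v : G) :
    ((sconj u A : Set G)) * ((sconj v B : Set G))
      = ((sconj v B : Set G)) * ((sconj u A : Set G)) := by
  have h0 := h (v * u⁻¹)
  unfold permutes at h0
  have himg := congrArg (Set.image ((MulAut.conj u⁻¹ : MulAut G) : G → G)) h0
  rw [Set.image_mul, Set.image_mul] at himg
  simp only [← coe_sconj, sconj_sconj_s2] at himg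
  simpa [inv_mul_cancel_right] using himg

end helpers2

section helpers3

variable [Group G]

lemma card_le_of_le' [Finite G] {H K : Subgroup G} (h : H ≤ K) :
    Nat.card H ≤ Nat.card K :=
  Subgroup.card_le_of_le h

lemma eq_of_le_of_card_le' [Finite G] {H K : Subgroup G} (h : H ≤ K)
    (hc : Nat.card K ≤ Nat.card H) : H = K :=
  Subgroup.eq_of_le_of_card_ge h hc

lemma step2 {A B : Subgroup G}
    (h' : ∀ u v : G, ((sconj u A : Set G)) * ((sconj v B : Set G))
      = ((sconj v B : Set G)) * ((sconj u A : Set G)))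
    (g : G) (hfull : (A : Set G) * (sconj g B : Set G) = Set.univ) :
    (A : Set G) * (B : Set G) = Set.univ := by
  have hswap := h' 1 g
  rw [sconj_one] at hswap
  have h1 : (sconj g B : Set G) * (A : Set G) = Set.univ := by rw [← hswap]; exact hfull
  have hg : g⁻¹ ∈ (sconj g B : Set G) * (A : Set G) := h1 ▸ Set.mem_univ g⁻¹
  obtain ⟨c, hc, a, ha, hca⟩ := hg
  have hca' : c * a = g⁻¹ := hca
  have hkey : sconj a (sconj g B) = B := by
    have h2 : sconj g B = sconj (g * c) B := by
      rw [← sconj_sconj_s2, sconj_self_mem hc]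
    rw [h2, sconj_sconj_s2]
    have : g * c * a = 1 := by rw [mul_assoc, hca', mul_inv_cancel]
    rw [this, sconj_one]
  rw [Set.eq_univ_iff_forall]
  intro t
  have ht : t * a⁻¹ ∈ (A : Set G) * (sconj g B : Set G) := hfull ▸ Set.mem_univ _
  obtain ⟨α, hα, xx, hxx, hprod⟩ := ht
  have hprod' : α * xx = t * a⁻¹ := hprod
  refine ⟨α * a, mul_mem hα ha, a⁻¹ * xx * a, ?_, ?_⟩
  · have hmem : a⁻¹ * xx * a ∈ sconj a (sconj g B) := by
      rw [mem_sconj, show a * (a⁻¹ * xx * a) * a⁻¹ = xx by group]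
      exact hxx
    rw [hkey] at hmem
    exact hmem
  · show α * a * (a⁻¹ * xx * a) = t
    rw [show α * a * (a⁻¹ * xx * a) = α * xx * a by group, hprod']
    group

end helpers3

section keysec

variable [Group G]

lemma key [Finite G] : ∀ (k : ℕ) (A B : Subgroup G),
    2 * Nat.card G ≤ Nat.card A + Nat.card B + k →
    (∀ u v : G, ((sconj u A : Set G)) * ((sconj v B : Set G))
      = ((sconj v B : Set G)) * ((sconj u A : Set G))) →
    (A : Set G) * (B : Set G) ≠ Set.univ →
    ∃ N : Subgroup G, N.Normal ∧ N ≠ ⊤ ∧ (A ≤ N ∨ B ≤ N) := by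
  intro k
  induction k using Nat.strong_induction_on with
  | _ k ih =>
  intro A B hk h' hG
  by_contra hC
  have hAtop : A ≠ ⊤ := by
    rintro rfl
    apply hG
    rw [Set.eq_univ_iff_forall]
    exact fun t => ⟨t, Subgroup.mem_top t, 1, B.one_mem, mul_one t⟩
  have hBtop : B ≠ ⊤ := by
    rintro rfl
    apply hG
    rw [Set.eq_univ_iff_forall]
    exact fun t => ⟨1, A.one_mem, t, Subgroup.mem_top t, one_mul t⟩
  have hnB : Subgroup.normalClosure (B : Set G) = ⊤ := by
    by_contra hn
    exact hC ⟨_, Subgroup.normalClosure_normal, hn,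
      Or.inr (fun x hx => Subgroup.subset_normalClosure hx)⟩
  have hcardA : Nat.card A < Nat.card G := by
    rcases lt_or_eq_of_le (Subgroup.card_le_card_group A) with h | h
    · exact h
    · exact absurd (Subgroup.eq_top_of_card_eq A h) hAtop
  have hcardB : Nat.card B < Nat.card G := by
    rcases lt_or_eq_of_le (Subgroup.card_le_card_group B) with h | h
    · exact h
    · exact absurd (Subgroup.eq_top_of_card_eq B h) hBtop
  have hk2 : 2 ≤ k := by omega
  have hAB : ((A ⊔ B : Subgroup G) : Set G) = (A : Set G) * (B : Set G) :=
    coe_sup_of_permute (by simpa [sconj_one] using h' 1 1)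
  have hPne : A ⊔ B ≠ ⊤ := by
    intro he
    apply hG
    rw [← hAB, he, Subgroup.coe_top]
  obtain ⟨M, hM, hPM⟩ := (eq_top_or_exists_le_coatom (A ⊔ B)).resolve_left hPne
  have hA_M : A ≤ M := le_trans le_sup_left hPM
  have hB_M : B ≤ M := le_trans le_sup_right hPM
  -- generic step: apply the induction hypothesis over a coatom if the joins grow
  have useIH : ∀ M' : Subgroup G, IsCoatom M' → A ≤ M' → B ≤ M' →
      Nat.card A + Nat.card B <
        Nat.card (⨆ w : {w : G // sconj w A ≤ M'}, sconj w.1 A : Subgroup G)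
          + Nat.card (⨆ w : {w : G // sconj w B ≤ M'}, sconj w.1 B : Subgroup G) → False := by
    intro M' hM' hAM' hBM' hbig
    set J := ⨆ w : {w : G // sconj w A ≤ M'}, sconj w.1 A with hJdef
    set K := ⨆ w : {w : G // sconj w B ≤ M'}, sconj w.1 B with hKdef
    have hAJ : A ≤ J := by
      have h1 : sconj (1 : G) A ≤ M' := by rwa [sconj_one]
      have h2 := le_iSup (fun w : {w : G // sconj w A ≤ M'} => sconj w.1 A) ⟨1, h1⟩
      rw [sconj_one] at h2
      exact h2
    have hBK : B ≤ K := by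
      have h1 : sconj (1 : G) B ≤ M' := by rwa [sconj_one]
      have h2 := le_iSup (fun w : {w : G // sconj w B ≤ M'} => sconj w.1 B) ⟨1, h1⟩
      rw [sconj_one] at h2
      exact h2
    have hJM : J ≤ M' := iSup_le fun w => w.2
    have hKM : K ≤ M' := iSup_le fun w => w.2
    have h'JK : ∀ u v : G, ((sconj u J : Set G)) * ((sconj v K : Set G))
        = ((sconj v K : Set G)) * ((sconj u J : Set G)) := by
      intro u v
      have hJu : sconj u J = ⨆ w : {w : G // sconj w A ≤ M'}, sconj (w.1 * u) A := by
        rw [hJdef, sconj_iSup]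
        exact iSup_congr fun w => sconj_sconj_s2 _ _ _
      have hKv : sconj v K = ⨆ w : {w : G // sconj w B ≤ M'}, sconj (w.1 * v) B := by
        rw [hKdef, sconj_iSup]
        exact iSup_congr fun w => sconj_sconj_s2 _ _ _
      rw [hJu, hKv]
      exact perm_joins h' _ _
    have hJKne : (J : Set G) * (K : Set G) ≠ Set.univ := by
      intro hun
      apply hM'.1
      rw [Subgroup.eq_top_iff']
      intro x
      have hx : x ∈ (J : Set G) * (K : Set G) := hun ▸ Set.mem_univ x
      obtain ⟨j, hj, k', hk', he⟩ := hx
      have he' : j * k' = x := he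
      rw [← he']
      exact mul_mem (hJM hj) (hKM hk')
    obtain ⟨N, hN, hNtop, hNle⟩ := ih (k - 1) (by omega) J K (by omega) h'JK hJKne
    exact hC ⟨N, hN, hNtop, hNle.imp (fun hle => le_trans hAJ hle) (fun hle => le_trans hBK hle)⟩
  by_cases hbig : Nat.card A + Nat.card B <
      Nat.card (⨆ w : {w : G // sconj w A ≤ M}, sconj w.1 A : Subgroup G)
        + Nat.card (⨆ w : {w : G // sconj w B ≤ M}, sconj w.1 B : Subgroup G)
  · exact useIH M hM hA_M hB_M hbig
  push_neg at hbig
  -- fixed point: the joins are A and B themselves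
  have hAJ : A ≤ ⨆ w : {w : G // sconj w A ≤ M}, sconj w.1 A := by
    have h1 : sconj (1 : G) A ≤ M := by rwa [sconj_one]
    have h2 := le_iSup (fun w : {w : G // sconj w A ≤ M} => sconj w.1 A) ⟨1, h1⟩
    rw [sconj_one] at h2
    exact h2
  have hBK : B ≤ ⨆ w : {w : G // sconj w B ≤ M}, sconj w.1 B := by
    have h1 : sconj (1 : G) B ≤ M := by rwa [sconj_one]
    have h2 := le_iSup (fun w : {w : G // sconj w B ≤ M} => sconj w.1 B) ⟨1, h1⟩
    rw [sconj_one] at h2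
    exact h2
  have hJA : (⨆ w : {w : G // sconj w A ≤ M}, sconj w.1 A) = A := by
    have c1 := card_le_of_le' hAJ
    have c2 := card_le_of_le' hBK
    exact (eq_of_le_of_card_le' hAJ (by omega)).symm
  have hKB : (⨆ w : {w : G // sconj w B ≤ M}, sconj w.1 B) = B := by
    have c1 := card_le_of_le' hAJ
    have c2 := card_le_of_le' hBK
    exact (eq_of_le_of_card_le' hBK (by omega)).symm
  have hconjA : ∀ u : G, sconj u A ≤ M → sconj u A = A := by
    intro u hu
    have hle : sconj u A ≤ A := by
      have h2 := le_iSup (fun w : {w : G // sconj w A ≤ M} => sconj w.1 A) ⟨u, hu⟩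
      rwa [hJA] at h2
    exact eq_of_le_of_card_le' hle (le_of_eq (card_sconj u A).symm)
  have hconjB : ∀ u : G, sconj u B ≤ M → sconj u B = B := by
    intro u hu
    have hle : sconj u B ≤ B := by
      have h2 := le_iSup (fun w : {w : G // sconj w B ≤ M} => sconj w.1 B) ⟨u, hu⟩
      rwa [hKB] at h2
    exact eq_of_le_of_card_le' hle (le_of_eq (card_sconj u B).symm)
  have hMnormA : M ≤ Subgroup.normalizer (A : Set G) := by
    intro m hm
    have hsc : sconj m A = A := hconjA m (sconj_le_of_le hA_M hm)
    rw [Subgroup.mem_normalizer_iff]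
    intro x
    rw [← mem_sconj, hsc]
  have hMnormB : M ≤ Subgroup.normalizer (B : Set G) := by
    intro m hm
    have hsc : sconj m B = B := hconjB m (sconj_le_of_le hB_M hm)
    rw [Subgroup.mem_normalizer_iff]
    intro x
    rw [← mem_sconj, hsc]
  have hnormA : Subgroup.normalizer (A : Set G) = M := by
    rcases hMnormA.lt_or_eq with hlt | heq
    · have htop := hM.2 _ hlt
      have : A.Normal := Subgroup.normalizer_eq_top_iff.mp htop
      exact absurd (hC ⟨A, this, hAtop, Or.inl le_rfl⟩) not_false
    · exact heq.symm
  have hnormB : Subgroup.normalizer (B : Set G) = M := by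
    rcases hMnormB.lt_or_eq with hlt | heq
    · have htop := hM.2 _ hlt
      have : B.Normal := Subgroup.normalizer_eq_top_iff.mp htop
      exact absurd (hC ⟨B, this, hBtop, Or.inr le_rfl⟩) not_false
    · exact heq.symm
  -- Claim: distinct conjugates of B generate the whole group
  have hclaim : ∀ y : G, sconj y B ≠ B → B ⊔ sconj y B = ⊤ := by
    intro y hy
    have hcomp : ∀ b : Bool, ((cond b B (sconj y B) : Subgroup G) : Set G) * (A : Set G)
        = (A : Set G) * ((cond b B (sconj y B) : Subgroup G) : Set G) := by
      intro b
      cases b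
      · have hv := h' 1 y
        rw [sconj_one] at hv
        exact hv.symm
      · have hv := h' 1 1
        rw [sconj_one, sconj_one] at hv
        exact hv.symm
    have hWsup : (⨆ b : Bool, cond b B (sconj y B)) = B ⊔ sconj y B := by
      rw [iSup_bool_eq]
      rfl
    have hAW : (A : Set G) * ((B ⊔ sconj y B : Subgroup G) : Set G)
        = ((B ⊔ sconj y B : Subgroup G) : Set G) * (A : Set G) := by
      rw [← hWsup]
      exact (permute_iSup_left (fun b => cond b B (sconj y B)) A hcomp).symm
    by_cases hWtop : A ⊔ (B ⊔ sconj y B) = ⊤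
    · have hcov : (A : Set G) * ((B ⊔ sconj y B : Subgroup G) : Set G) = Set.univ := by
        rw [← coe_sup_of_permute hAW, hWtop, Subgroup.coe_top]
      have hconjBW : ∀ g : G, sconj g B ≤ B ⊔ sconj y B := by
        intro g
        have hg : g ∈ (A : Set G) * ((B ⊔ sconj y B : Subgroup G) : Set G) :=
          hcov ▸ Set.mem_univ g
        obtain ⟨a, ha, w, hw, he⟩ := hg
        have he' : a * w = g := he
        have hBa : sconj a B = B := by
          have haM : a ∈ Subgroup.normalizer (B : Set G) := hnormB ▸ hA_M ha
          rw [Subgroup.mem_normalizer_iff] at haM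
          ext x
          rw [mem_sconj]
          exact (haM x).symm
        rw [← he', ← sconj_sconj_s2, hBa]
        exact sconj_le_of_le le_sup_left hw
      have hncl : Subgroup.normalClosure (B : Set G) ≤ B ⊔ sconj y B := by
        show Subgroup.closure (Group.conjugatesOfSet (B : Set G)) ≤ B ⊔ sconj y B
        rw [Subgroup.closure_le]
        intro x hx
        rw [Group.mem_conjugatesOfSet_iff] at hx
        obtain ⟨b, hb, hconj⟩ := hx
        rw [isConj_iff] at hconj
        obtain ⟨c, hc⟩ := hconj
        have hxm : x ∈ sconj c⁻¹ B := by
          rw [mem_sconj, inv_inv, ← hc, show c⁻¹ * (c * b * c⁻¹) * c = b by group]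
          exact hb
        exact hconjBW c⁻¹ hxm
      rw [hnB] at hncl
      exact top_le_iff.mp hncl
    · obtain ⟨M₁, hM₁, hWM₁⟩ :=
        (eq_top_or_exists_le_coatom (A ⊔ (B ⊔ sconj y B))).resolve_left hWtop
      have hAM₁ : A ≤ M₁ := le_trans le_sup_left hWM₁
      have hBM₁ : B ≤ M₁ := le_trans (le_trans le_sup_left le_sup_right) hWM₁
      have hyM₁ : sconj y B ≤ M₁ := le_trans (le_trans le_sup_right le_sup_right) hWM₁
      have hAJ₁ : A ≤ ⨆ w : {w : G // sconj w A ≤ M₁}, sconj w.1 A := by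
        have h1 : sconj (1 : G) A ≤ M₁ := by rwa [sconj_one]
        have h2 := le_iSup (fun w : {w : G // sconj w A ≤ M₁} => sconj w.1 A) ⟨1, h1⟩
        rw [sconj_one] at h2
        exact h2
      have hBK₁ : B ≤ ⨆ w : {w : G // sconj w B ≤ M₁}, sconj w.1 B := by
        have h1 : sconj (1 : G) B ≤ M₁ := by rwa [sconj_one]
        have h2 := le_iSup (fun w : {w : G // sconj w B ≤ M₁} => sconj w.1 B) ⟨1, h1⟩
        rw [sconj_one] at h2
        exact h2
      have hyK₁ : sconj y B ≤ ⨆ w : {w : G // sconj w B ≤ M₁}, sconj w.1 B :=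
        le_iSup (fun w : {w : G // sconj w B ≤ M₁} => sconj w.1 B) ⟨y, hyM₁⟩
      have hKgt : Nat.card B < Nat.card (⨆ w : {w : G // sconj w B ≤ M₁}, sconj w.1 B : Subgroup G) := by
        by_contra hle
        push_neg at hle
        have hKB₁ : (⨆ w : {w : G // sconj w B ≤ M₁}, sconj w.1 B) = B :=
          (eq_of_le_of_card_le' hBK₁ hle).symm
        rw [hKB₁] at hyK₁
        exact hy (eq_of_le_of_card_le' hyK₁ (le_of_eq (card_sconj y B).symm))
      have hJge := card_le_of_le' hAJ₁
      exact (useIH M₁ hM₁ hAM₁ hBM₁ (by omega)).elim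
  -- final contradiction
  obtain ⟨g, hg⟩ : ∃ g : G, g ∉ M := by
    by_contra hall
    push_neg at hall
    exact hM.1 ((Subgroup.eq_top_iff' M).mpr hall)
  have hfull : (A : Set G) * ((sconj g B : Subgroup G) : Set G) ≠ Set.univ :=
    fun hf => hG (step2 h' g hf)
  have hQ : ((A ⊔ sconj g B : Subgroup G) : Set G)
      = (A : Set G) * ((sconj g B : Subgroup G) : Set G) :=
    coe_sup_of_permute (by simpa [sconj_one] using h' 1 g)
  have hQne : A ⊔ sconj g B ≠ ⊤ := by
    intro he
    apply hfull
    rw [← hQ, he, Subgroup.coe_top]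
  have hfix : ∀ a ∈ A, sconj (g * a) B = sconj g B := by
    intro a ha
    by_contra hne
    have hyB : sconj (g * a * g⁻¹) B ≠ B := by
      intro he
      apply hne
      have h2 := congrArg (sconj g) he
      rw [sconj_sconj_s2, show g * a * g⁻¹ * g = g * a by group] at h2
      exact h2
    have htop := hclaim _ hyB
    have h3 := congrArg (sconj g) htop
    rw [sconj_sup, sconj_top, sconj_sconj_s2, show g * a * g⁻¹ * g = g * a by group] at h3
    have hle : sconj g B ⊔ sconj (g * a) B ≤ A ⊔ sconj g B := by
      refine sup_le le_sup_right ?_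
      rw [← sconj_sconj_s2]
      exact sconj_le_of_le le_sup_right (le_sup_left (a := A) (b := sconj g B) ha)
    rw [h3] at hle
    exact hQne (top_le_iff.mp hle)
  have hgA : sconj g⁻¹ A ≤ M := by
    intro x hx
    rw [mem_sconj, inv_inv] at hx
    have h4 := hfix _ hx
    rw [show g * (g⁻¹ * x * g) = x * g by group, ← sconj_sconj_s2] at h4
    have h5 := congrArg (sconj g⁻¹) h4
    rw [sconj_cancel, sconj_cancel] at h5
    have : x ∈ Subgroup.normalizer (B : Set G) := by
      rw [Subgroup.mem_normalizer_iff]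
      intro t
      rw [← mem_sconj, h5]
    rw [hnormB] at this
    exact this
  have h6 : sconj g⁻¹ A = A := hconjA g⁻¹ hgA
  have h7 : g⁻¹ ∈ Subgroup.normalizer (A : Set G) := by
    rw [Subgroup.mem_normalizer_iff]
    intro t
    rw [← mem_sconj, h6]
  rw [hnormA] at h7
  exact hg (by simpa using M.inv_mem h7)

end keysec


/-- Kegel: If `G ≠ AB` and `A` permutes with `B^x` for all `x`, then `G`
has a proper normal subgroup containing `A` or `B`. -/
theorem stmt2 [Group G] [Finite G] (A B : Subgroup G)
    (hG : (A : Set G) * (B : Set G) ≠ Set.univ)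
    (h : ∀ x : G, permutes A (sconj x B)) :
    ∃ N : Subgroup G, N.Normal ∧ N ≠ ⊤ ∧ (A ≤ N ∨ B ≤ N) :=
  key (2 * Nat.card G) A B (by omega) (h'_of_h h) hG
end

section
/- Let P be a normal p-subgroup of a finite group G. Then every chief factor of G below P is cyclic (i.e., P is hypercyclically embedded in G) if and only if G/C_G(P) is strictly p-closed. -/
open Subgroup Pointwise

variable {G : Type*}

namespace Stmt3

lemma card_lt_of_lt [Group G] [Finite G] {A B : Subgroup G} (h : A < B) :
    Nat.card A < Nat.card B := by
  have : Nat.card (A : Set G) < Nat.card (B : Set G) := by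
    rw [Nat.card_coe_set_eq, Nat.card_coe_set_eq]
    exact Set.ncard_lt_ncard (SetLike.coe_ssubset_coe.mpr h) (Set.toFinite _)
  exact this

lemma exists_chief_between [Group G] [Finite G] :
    ∀ (c : ℕ) {K B : Subgroup G}, Nat.card B ≤ c → K.Normal → B.Normal → K < B →
      ∃ H, IsChiefFactor K H ∧ H ≤ B := by
  intro c
  induction c with
  | zero =>
    intro K B hB _ _ _
    exact absurd (Nat.card_pos.trans_le hB) (lt_irrefl 0)
  | succ c ih =>
    intro K B hB hK hBn hKB
    by_cases hmin : ∀ N : Subgroup G, N.Normal → K < N → N ≤ B → N = B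
    · exact ⟨B, ⟨hK, hBn, hKB, hmin⟩, le_rfl⟩
    · push_neg at hmin
      obtain ⟨N, hNn, hKN, hNB, hne⟩ := hmin
      have hNB' : N < B := lt_of_le_of_ne hNB hne
      obtain ⟨H, h1, h2⟩ := ih (Nat.le_of_lt_succ ((card_lt_of_lt hNB').trans_le hB)) hK hNn hKN
      exact ⟨H, h1, h2.trans hNB'.le⟩

lemma exists_chief_chain_aux [Group G] [Finite G] (P : Subgroup G) (hPn : P.Normal) :
    ∀ (c : ℕ) (K : Subgroup G), K.Normal → K ≤ P → Nat.card P - Nat.card K ≤ c →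
      ∃ (n : ℕ) (f : ℕ → Subgroup G), f 0 = K ∧ f n = P ∧
        ∀ i, i < n → IsChiefFactor (f i) (f (i+1)) ∧ f (i+1) ≤ P := by
  intro c
  induction c with
  | zero =>
    intro K hK hKP h0
    have hKP' : K = P := by
      rcases lt_or_eq_of_le hKP with hlt | he
      · exact absurd (Nat.sub_pos_of_lt (card_lt_of_lt hlt)) (by omega)
      · exact he
    exact ⟨0, fun _ => K, rfl, hKP', fun i hi => absurd hi (Nat.not_lt_zero i)⟩
  | succ c ih =>
    intro K hK hKP hc
    rcases eq_or_lt_of_le hKP with he | hlt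
    · exact ⟨0, fun _ => K, rfl, he.symm ▸ rfl, fun i hi => absurd hi (Nat.not_lt_zero i)⟩
    · obtain ⟨H, hHc, hHP⟩ := exists_chief_between (Nat.card P) le_rfl hK hPn hlt
      have hKH : K < H := hHc.2.2.1
      have hmeas : Nat.card P - Nat.card H ≤ c := by
        have := card_lt_of_lt hKH
        have h2 : Nat.card H ≤ Nat.card P := Subgroup.card_le_of_le hHP
        omega
      obtain ⟨n, f, hf0, hfn, hsteps⟩ := ih H hHc.2.1 hHP hmeas
      refine ⟨n + 1, fun i => if i = 0 then K else f (i - 1), by simp, by simp [hfn], ?_⟩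
      intro i hi
      rcases Nat.eq_zero_or_pos i with rfl | hipos
      · simpa [hf0] using ⟨hHc, hHP⟩
      · have h1 : i ≠ 0 := hipos.ne'
        have h2 : i + 1 ≠ 0 := by omega
        simp only [h1, h2, if_neg, ite_false]
        have : i - 1 + 1 = i := by omega
        have h3 := hsteps (i - 1) (by omega)
        rw [this] at h3
        have h4 : i + 1 - 1 = i := by omega
        rw [h4]
        exact h3
      
lemma exists_chief_chain [Group G] [Finite G] (P : Subgroup G) (hPn : P.Normal) :
    ∃ (n : ℕ) (f : ℕ → Subgroup G), f 0 = ⊥ ∧ f n = P ∧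
      ∀ i, i < n → IsChiefFactor (f i) (f (i+1)) ∧ f (i+1) ≤ P :=
  exists_chief_chain_aux P hPn (Nat.card P - Nat.card (⊥ : Subgroup G)) ⊥
    (by constructor; intro x hx g; simp_all) bot_le le_rfl



lemma factor_action [Group G] [Finite G] {p : ℕ} (hp : p.Prime) {A B : Subgroup G}
    (hcf : IsChiefFactor A B) (hBp : IsPGroup p B) (hcyc : CyclicFactor A B) :
    (∀ g : G, ∀ x ∈ B, g ^ (p-1) * x * (g ^ (p-1))⁻¹ * x⁻¹ ∈ A) ∧
    (∀ g h : G, ∀ x ∈ B, (g*h*g⁻¹*h⁻¹) * x * (g*h*g⁻¹*h⁻¹)⁻¹ * x⁻¹ ∈ A) := by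
  haveI hAn : A.Normal := hcf.1
  have hBn : B.Normal := hcf.2.1
  obtain ⟨c, hcB, hgen⟩ := hcyc
  set Q := G ⧸ A with hQ
  set cb : Q := ((c : G) : Q) with hcb
  have himg : ∀ x ∈ B, ∃ k : ℤ, ((x : G) : Q) = cb ^ k := by
    intro x hx
    obtain ⟨k, hk⟩ := hgen x hx
    exact ⟨k, by rw [← (QuotientGroup.eq (s := A)).mpr hk, QuotientGroup.mk_zpow]⟩
  have hABlt : A < B := hcf.2.2.1
  have hcne : cb ≠ 1 := by
    intro h1
    obtain ⟨x, hxB, hxA⟩ := SetLike.exists_of_lt hABlt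
    obtain ⟨k, hk⟩ := himg x hxB
    rw [h1, one_zpow] at hk
    exact hxA ((QuotientGroup.eq_one_iff x).mp hk)
  obtain ⟨n, hn⟩ : ∃ n, cb ^ (p ^ n) = 1 := by
    obtain ⟨n, hn⟩ := hBp ⟨c, hcB⟩
    have h2 : (c ^ p ^ n : G) = 1 := by
      have := congrArg (Subtype.val) hn; simpa using this
    exact ⟨n, by rw [hcb, ← QuotientGroup.mk_pow, h2]; rfl⟩
  obtain ⟨e, he_le, he⟩ := (Nat.dvd_prime_pow hp).mp (orderOf_dvd_of_pow_eq_one hn)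
  have he1 : 1 ≤ e := by
    rcases Nat.eq_zero_or_pos e with rfl | h
    · rw [pow_zero] at he; exact absurd (orderOf_eq_one_iff.mp he) hcne
    · exact h
  have hmapzp : Subgroup.map (QuotientGroup.mk' A) B = Subgroup.zpowers cb := by
    apply le_antisymm
    · rintro _ ⟨x, hx, rfl⟩
      obtain ⟨k, hk⟩ := himg x hx
      rw [QuotientGroup.mk'_apply]
      rw [hk]
      exact Subgroup.zpow_mem _ (Subgroup.mem_zpowers cb) k
    · rw [Subgroup.zpowers_le]; exact ⟨c, hcB, rfl⟩
  haveI hmapn : (Subgroup.map (QuotientGroup.mk' A) B).Normal :=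
    hBn.map _ (QuotientGroup.mk'_surjective A)
  have hconjc : ∀ u : Q, ∃ m : ℤ, u * cb * u⁻¹ = cb ^ m := by
    intro u
    have h2 : u * cb * u⁻¹ ∈ Subgroup.zpowers cb := by
      rw [← hmapzp]
      exact hmapn.conj_mem _ (by rw [hmapzp]; exact Subgroup.mem_zpowers cb) u
    obtain ⟨m, hm⟩ := h2
    exact ⟨m, hm.symm⟩
  have hconjpow : ∀ (u : Q) (m k : ℤ), (u * cb * u⁻¹ = cb ^ m) →
      u * cb ^ k * u⁻¹ = cb ^ (m * k) := by
    intro u m k hu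
    rw [← conj_zpow, hu, ← zpow_mul]
  -- order of cb is exactly p
  have horder : orderOf cb = p := by
    obtain rfl | he2 : e = 1 ∨ 2 ≤ e := by omega
    · rw [he, pow_one]
    · exfalso
      have hzpn : (Subgroup.zpowers (cb ^ p)).Normal := by
        constructor
        intro x hx g
        obtain ⟨k, hk⟩ := Subgroup.mem_zpowers_iff.mp hx
        obtain ⟨m, hm⟩ := hconjc g
        rw [Subgroup.mem_zpowers_iff]
        refine ⟨m * k, ?_⟩
        rw [← hk]
        have h3 : ((cb ^ p) ^ k : Q) = cb ^ ((p : ℤ) * k) := by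
          rw [← zpow_natCast, ← zpow_mul]
        have h3' : ((cb ^ p) ^ (m * k) : Q) = cb ^ ((p : ℤ) * (m * k)) := by
          rw [← zpow_natCast, ← zpow_mul]
        rw [h3, h3', hconjpow g m _ hm]
        congr 1
        ring
      set N := Subgroup.comap (QuotientGroup.mk' A) (Subgroup.zpowers (cb ^ p)) with hN
      have hNn : N.Normal := hzpn.comap _
      have hcpB : (c : G) ^ p ∈ B := Subgroup.pow_mem B hcB p
      have hcpne : cb ^ p ≠ 1 := by
        intro h1
        have hd := orderOf_dvd_of_pow_eq_one h1
        rw [he] at hd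
        have h2 := Nat.le_of_dvd hp.pos hd
        have h3 : p ^ 2 ≤ p ^ e := Nat.pow_le_pow_right hp.pos he2
        have h4 : p ^ 2 = p * p := sq p
        have := hp.two_le
        nlinarith
      have hAN : A < N := by
        constructor
        · intro a ha
          have : ((a : G) : Q) = 1 := (QuotientGroup.eq_one_iff a).mpr ha
          show QuotientGroup.mk' A a ∈ Subgroup.zpowers (cb ^ p)
          rw [QuotientGroup.mk'_apply, this]
          exact Subgroup.one_mem _
        · intro hle
          have hcpN : (c : G) ^ p ∈ N := by
            show QuotientGroup.mk' A (c ^ p) ∈ Subgroup.zpowers (cb ^ p)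
            rw [QuotientGroup.mk'_apply, QuotientGroup.mk_pow]
            exact Subgroup.mem_zpowers _
          have : (c : G) ^ p ∈ A := hle hcpN
          exact hcpne (by rw [hcb, ← QuotientGroup.mk_pow]; exact (QuotientGroup.eq_one_iff _).mpr this)
      have hNB : N ≤ B := by
        intro x hx
        have hx2 : ((x : G) : Q) ∈ Subgroup.zpowers (cb ^ p) := hx
        obtain ⟨k, hk⟩ := hx2
        have : ((x : G) : Q) ∈ Subgroup.map (QuotientGroup.mk' A) B := by
          rw [hmapzp, ← hk]
          exact Subgroup.zpow_mem _ (Subgroup.pow_mem _ (Subgroup.mem_zpowers cb) p) k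
        obtain ⟨b, hbB, hb⟩ := this
        have : b⁻¹ * x ∈ A := (QuotientGroup.eq (s := A)).mp hb
        have := mul_mem hbB (hABlt.le this)
        rwa [← mul_assoc, mul_inv_cancel, one_mul] at this
      have hNeqB : N = B := hcf.2.2.2 N hNn hAN hNB
      -- then c ∈ N gives contradiction
      have hcN : (c : G) ∈ N := hNeqB ▸ hcB
      have hzz : cb ∈ Subgroup.zpowers (cb ^ p) := hcN
      obtain ⟨k, hk⟩ := Subgroup.mem_zpowers_iff.mp hzz
      have hpk : cb ^ ((p : ℤ) * k) = (cb ^ (p : ℕ)) ^ k := by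
        rw [zpow_mul, zpow_natCast]
      have h4 : cb ^ ((p : ℤ) * k) = cb ^ (1 : ℤ) := by
        rw [zpow_one, hpk, hk]
      rw [zpow_eq_zpow_iff_modEq, he] at h4
      have h5 : ((p : ℤ)) ∣ ((p ^ e : ℕ) : ℤ) := by
        push_cast
        exact dvd_pow_self _ (by omega)
      have h6 : (p : ℤ) * k ≡ 1 [ZMOD (p : ℤ)] := h4.of_dvd h5
      have h9 : (p:ℤ) ∣ (1 - p * k) := (Int.ModEq.dvd h6)
      have h8 : (p:ℤ) ∣ p * k := Dvd.intro k rfl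
      have h7 : (p : ℤ) ∣ 1 := by
        have : (1 : ℤ) = (1 - p * k) + p * k := by ring
        rw [this]
        exact dvd_add h9 h8
      have := Int.le_of_dvd one_pos h7
      have := hp.two_le
      omega
  -- helper converting fixed conjugation into the subgroup condition
  have hfix : ∀ u : G, ((u : Q) * cb * (u : Q)⁻¹ = cb) → ∀ x ∈ B, u * x * u⁻¹ * x⁻¹ ∈ A := by
    intro u hu x hx
    obtain ⟨k, hk⟩ := himg x hx
    rw [← QuotientGroup.eq_one_iff]
    simp only [QuotientGroup.mk_mul, QuotientGroup.mk_inv]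
    rw [hk]
    have := hconjpow (u : Q) 1 k (by rw [zpow_one]; exact hu)
    rw [one_mul] at this
    rw [this]
    group
  have hfermat : ∀ u : Q, u ^ (p - 1) * cb * (u ^ (p-1))⁻¹ = cb := by
    intro u
    obtain ⟨m, hm⟩ := hconjc u
    have hmne : ¬ ((p : ℤ) ∣ m) := by
      intro hd
      obtain ⟨t, rfl⟩ := hd
      have h1 : cb ^ ((p : ℤ) * t) = 1 := by
        rw [zpow_mul, zpow_natCast, ← horder, pow_orderOf_eq_one, one_zpow]
      rw [h1] at hm
      apply hcne
      have h2 : cb = u⁻¹ * (u * cb * u⁻¹) * u := by group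
      rw [hm] at h2
      rw [h2]
      group
    have hiter : ∀ j : ℕ, u ^ j * cb * (u ^ j)⁻¹ = cb ^ (m ^ j) := by
      intro j
      induction j with
      | zero => simp
      | succ j ih =>
        rw [pow_succ' u j, mul_inv_rev]
        calc u * u ^ j * cb * ((u ^ j)⁻¹ * u⁻¹)
            = u * (u ^ j * cb * (u ^ j)⁻¹) * u⁻¹ := by group
          _ = u * cb ^ (m ^ j) * u⁻¹ := by rw [ih]
          _ = cb ^ (m * m ^ j) := hconjpow u m (m ^ j) hm
          _ = cb ^ (m ^ (j+1)) := by rw [← pow_succ']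
    have h2 := hiter (p - 1)
    rw [h2]
    have h3 : cb ^ (m ^ (p-1)) = cb ^ (1 : ℤ) := by
      rw [zpow_eq_zpow_iff_modEq, horder]
      have h4 : ((m : ZMod p) ^ (p - 1)) = 1 := by
        haveI := Fact.mk hp
        apply ZMod.pow_card_sub_one_eq_one
        rw [Ne, ZMod.intCast_zmod_eq_zero_iff_dvd]
        exact_mod_cast hmne
      have h5 : ((m ^ (p-1) : ℤ) : ZMod p) = ((1 : ℤ) : ZMod p) := by push_cast; exact h4
      exact (ZMod.intCast_eq_intCast_iff _ _ _).mp h5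
    rw [h3, zpow_one]
  constructor
  · intro g x hx
    apply hfix
    · rw [QuotientGroup.mk_pow]
      exact hfermat (g : Q)
    · exact hx
  · intro g h x hx
    apply hfix
    · obtain ⟨mg, hmg⟩ := hconjc (g : Q)
      obtain ⟨mh, hmh⟩ := hconjc (h : Q)
      obtain ⟨mg', hmg'⟩ := hconjc ((g : Q)⁻¹)
      obtain ⟨mh', hmh'⟩ := hconjc ((h : Q)⁻¹)
      have hrel : ∀ (u : Q) (a b : ℤ), (u * cb * u⁻¹ = cb ^ a) → (u⁻¹ * cb * u = cb ^ b) →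
          cb ^ (a * b) = cb ^ (1:ℤ) := by
        intro u a b ha hb
        have h1 : u * (u⁻¹ * cb * u) * u⁻¹ = cb := by group
        have h2 : u * cb ^ b * u⁻¹ = cb := by rw [← hb]; exact h1
        have h3 := hconjpow u a b ha
        rw [h2] at h3 -- h3 : cb = cb ^ (a * b)
        rw [← h3, zpow_one]
      have hrg : cb ^ (mg * mg') = cb ^ (1:ℤ) := by
        apply hrel (g : Q) mg mg' hmg
        have := hmg'
        rwa [inv_inv] at this
      have hrh : cb ^ (mh * mh') = cb ^ (1:ℤ) := by
        apply hrel (h : Q) mh mh' hmh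
        have := hmh'
        rwa [inv_inv] at this
      -- compute the conjugation by the commutator
      simp only [QuotientGroup.mk_mul, QuotientGroup.mk_inv]
      have step : ∀ (u : Q) (a k : ℤ), (u * cb * u⁻¹ = cb ^ a) → u * cb ^ k * u⁻¹ = cb ^ (a * k) :=
        hconjpow
      set gq := (g : Q); set hq := (h : Q)
      have e1 : hq⁻¹ * cb * hq⁻¹⁻¹ = cb ^ mh' := hmh'
      have expand : gq * hq * gq⁻¹ * hq⁻¹ * cb * (gq * hq * gq⁻¹ * hq⁻¹)⁻¹
          = gq * (hq * (gq⁻¹ * (hq⁻¹ * cb * hq⁻¹⁻¹) * gq⁻¹⁻¹) * hq⁻¹) * gq⁻¹ := by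
        group
      rw [expand, e1, step gq⁻¹ mg' mh' hmg', step hq mh (mg' * mh') hmh,
          step gq mg (mh * (mg' * mh')) hmg]
      -- now show cb ^ (mg * (mh * (mg' * mh'))) = cb
      have : cb ^ (mg * (mh * (mg' * mh'))) = cb ^ ((mg * mg') * (mh * mh')) := by
        ring_nf
      rw [this]
      have h6 : cb ^ ((mg * mg') * (mh * mh')) = (cb ^ (mg * mg')) ^ (mh * mh') := by
        rw [← zpow_mul]
      rw [h6, hrg, zpow_one, hrh, zpow_one]
    · exact hx



/-- A coprime-order element stabilizing a chain of p-groups centralizes the top. -/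
lemma stability_centralizes [Group G] [Finite G] {p : ℕ} (hp : p.Prime)
    {n : ℕ} {f : ℕ → Subgroup G} (hf0 : f 0 = ⊥)
    (hnorm : ∀ i, i ≤ n → (f i).Normal)
    (hpgrp : ∀ i, i ≤ n → IsPGroup p (f i))
    {t : G} (hcop : Nat.Coprime p (orderOf t))
    (hstab : ∀ i, i < n → ∀ x ∈ f (i+1), t * x * t⁻¹ * x⁻¹ ∈ f i) :
    ∀ x ∈ f n, t * x = x * t := by
  haveI := Fact.mk hp
  have main : ∀ i, i ≤ n → ∀ x ∈ f i, t * x = x * t := by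
    intro i
    induction i with
    | zero =>
      intro _ x hx
      rw [hf0] at hx
      rw [Subgroup.mem_bot.mp hx]
      simp
    | succ i ih =>
      intro hin x hx
      have hiin : i ≤ n := by omega
      have ihc := ih hiin
      -- d := x⁻¹ * t * x * t⁻¹ ∈ f i
      have hd : x⁻¹ * t * x * t⁻¹ ∈ f i := by
        have h1 : t * x * t⁻¹ * x⁻¹ ∈ f i := hstab i (by omega) x hx
        have h2 := (hnorm i hiin).conj_mem _ h1 x⁻¹
        have h3 : x⁻¹ * (t * x * t⁻¹ * x⁻¹) * x⁻¹⁻¹ = x⁻¹ * t * x * t⁻¹ := by group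
        rwa [h3] at h2
      set d := x⁻¹ * t * x * t⁻¹ with hdd
      -- iterated: x⁻¹ * t^k * x * t⁻ᵏ = d ^ k
      have hiter : ∀ k : ℕ, x⁻¹ * t ^ k * x * (t ^ k)⁻¹ = d ^ k := by
        intro k
        induction k with
        | zero => simp
        | succ k ihk =>
          have hdk : d ^ k ∈ f i := Subgroup.pow_mem _ hd k
          have hcomm : t * d ^ k * t⁻¹ = d ^ k := by
            have := ihc _ hdk
            rw [this]; group
          calc x⁻¹ * t ^ (k+1) * x * (t ^ (k+1))⁻¹
              = d * (t * (x⁻¹ * t ^ k * x * (t ^ k)⁻¹) * t⁻¹) := by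
                rw [hdd]; group
            _ = d * (t * d ^ k * t⁻¹) := by rw [ihk]
            _ = d * d ^ k := by rw [hcomm]
            _ = d ^ (k+1) := by rw [← pow_succ']
      have hdord : d ^ orderOf t = 1 := by
        have := hiter (orderOf t)
        rw [pow_orderOf_eq_one, inv_one, mul_one] at this
        rw [← this]
        group
      have hdvd1 : orderOf d ∣ orderOf t := orderOf_dvd_of_pow_eq_one hdord
      -- orderOf d divides card of f i, a p-power
      have hdfi : d ∈ f i := hd
      have hdvd2 : orderOf d ∣ Nat.card (f i) := by
        have : orderOf (⟨d, hdfi⟩ : f i) = orderOf d := Subgroup.orderOf_mk d hdfi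
        rw [← this]
        exact orderOf_dvd_natCard _
      obtain ⟨j, hj⟩ := (hpgrp i hiin).exists_card_eq
      rw [hj] at hdvd2
      have hgcd : orderOf d ∣ Nat.gcd (p ^ j) (orderOf t) := Nat.dvd_gcd hdvd2 hdvd1
      rw [Nat.Coprime.gcd_eq_one (Nat.Coprime.pow_left j hcop)] at hgcd
      have hd1 : d = 1 := orderOf_eq_one_iff.mp (Nat.dvd_one.mp hgcd)
      have : x⁻¹ * t * x * t⁻¹ = 1 := hd1
      calc t * x = x * (x⁻¹ * t * x * t⁻¹) * t := by group
        _ = x * 1 * t := by rw [this]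
        _ = x * t := by group
  exact main n le_rfl


lemma forward [Group G] [Finite G] {p : ℕ} (hp : p.Prime) {P : Subgroup G}
    (hPn : P.Normal) (hPp : IsPGroup p P)
    (hhyp : ∀ K H : Subgroup G, IsChiefFactor K H → H ≤ P → CyclicFactor K H) :
    StrictlyPClosedOver p (Subgroup.centralizer (P : Set G)) := by
  haveI := Fact.mk hp
  obtain ⟨n, f, hf0, hfn, hsteps⟩ := exists_chief_chain P hPn
  have hfle : ∀ i, i ≤ n → f i ≤ P := by
    intro i hi
    rcases Nat.eq_zero_or_pos i with rfl | h
    · rw [hf0]; exact bot_le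
    · obtain ⟨j, rfl⟩ : ∃ j, i = j + 1 := ⟨i - 1, by omega⟩
      exact (hsteps j (by omega)).2
  have hfnorm : ∀ i, i ≤ n → (f i).Normal := by
    intro i hi
    rcases Nat.eq_zero_or_pos i with rfl | h
    · rw [hf0]
      constructor; intro x hx g; rw [Subgroup.mem_bot.mp hx]; simp
    · obtain ⟨j, rfl⟩ : ∃ j, i = j + 1 := ⟨i - 1, by omega⟩
      exact (hsteps j (by omega)).1.2.1
  have hfp : ∀ i, i ≤ n → IsPGroup p (f i) := fun i hi => hPp.to_le (hfle i hi)
  set S : Subgroup G :=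
    { carrier := {g : G | ∀ i, i < n → ∀ x ∈ f (i+1), g * x * g⁻¹ * x⁻¹ ∈ f i}
      one_mem' := by
        intro i hi x hx
        have : (1 : G) * x * 1⁻¹ * x⁻¹ = 1 := by group
        rw [this]; exact Subgroup.one_mem _
      mul_mem' := by
        intro a b ha hb i hi x hx
        have hw := hb i hi x hx
        have h1 := (hfnorm i (le_of_lt hi)).conj_mem _ hw a
        have h2 := ha i hi x hx
        have h3 : a * b * x * (a * b)⁻¹ * x⁻¹
            = (a * (b * x * b⁻¹ * x⁻¹) * a⁻¹) * (a * x * a⁻¹ * x⁻¹) := by group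
        rw [h3]; exact mul_mem h1 h2
      inv_mem' := by
        intro a ha i hi x hx
        have hy : a⁻¹ * x * a ∈ f (i+1) := by
          have := (hfnorm (i+1) hi).conj_mem x hx a⁻¹
          simpa using this
        have h2 := ha i hi _ hy
        have h3 : (a * (a⁻¹ * x * a) * a⁻¹ * (a⁻¹ * x * a)⁻¹)⁻¹
            = a⁻¹ * x * a⁻¹⁻¹ * x⁻¹ := by group
        rw [← h3]; exact inv_mem h2 } with hSdef
  have hmemS : ∀ g : G, g ∈ S ↔ ∀ i, i < n → ∀ x ∈ f (i+1), g * x * g⁻¹ * x⁻¹ ∈ f i :=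
    fun g => Iff.rfl
  -- condition 6 and 5 via factor_action
  have hS6 : ∀ g : G, g ^ (p - 1) ∈ S := by
    intro g
    rw [hmemS]
    intro i hi x hx
    have hstep := hsteps i hi
    have hcyc := hhyp (f i) (f (i+1)) hstep.1 hstep.2
    exact (factor_action hp hstep.1 (hfp (i+1) hi) hcyc).1 g x hx
  have hS5 : ∀ a b : G, a * b * a⁻¹ * b⁻¹ ∈ S := by
    intro a b
    rw [hmemS]
    intro i hi x hx
    have hstep := hsteps i hi
    have hcyc := hhyp (f i) (f (i+1)) hstep.1 hstep.2
    exact (factor_action hp hstep.1 (hfp (i+1) hi) hcyc).2 a b x hx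
  have hSnormal : S.Normal := by
    constructor
    intro s hs g
    rw [hmemS] at hs ⊢
    intro i hi x hx
    have hy : g⁻¹ * x * g ∈ f (i+1) := by
      have := (hfnorm (i+1) hi).conj_mem x hx g⁻¹
      simpa using this
    have h2 := hs i hi _ hy
    have h3 := (hfnorm i (le_of_lt hi)).conj_mem _ h2 g
    have h4 : g * (s * (g⁻¹ * x * g) * s⁻¹ * (g⁻¹ * x * g)⁻¹) * g⁻¹
        = g * s * g⁻¹ * x * (g * s * g⁻¹)⁻¹ * x⁻¹ := by group
    rw [← h4]; exact h3
  have hCle : Subgroup.centralizer (P : Set G) ≤ S := by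
    intro g hg
    rw [hmemS]
    intro i hi x hx
    have hxP : x ∈ P := hfle (i+1) hi hx
    have hc : x * g = g * x := Subgroup.mem_centralizer_iff.mp hg x hxP
    have : g * x * g⁻¹ * x⁻¹ = 1 := by
      rw [← hc]; group
    rw [this]; exact Subgroup.one_mem _
  have hSp : ∀ s ∈ S, ∃ m : ℕ, s ^ p ^ m ∈ Subgroup.centralizer (P : Set G) := by
    intro s hs
    refine ⟨(orderOf s).factorization p, ?_⟩
    set a := (orderOf s).factorization p with ha
    set t := s ^ p ^ a with ht
    have hts : t ∈ S := Subgroup.pow_mem S hs _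
    have hords : orderOf s ≠ 0 := (orderOf_pos s).ne'
    have hgcd : Nat.gcd (orderOf s) (p ^ a) = p ^ a :=
      Nat.gcd_eq_right (Nat.ordProj_dvd (orderOf s) p)
    have hordt : orderOf t = orderOf s / p ^ a := by
      rw [ht, orderOf_pow, hgcd]
    have hcop : Nat.Coprime p (orderOf t) := by
      rw [hordt]
      exact Nat.coprime_ordCompl hp hords
    have hc := stability_centralizes hp hf0 hfnorm hfp hcop
      (fun i hi x hx => (hmemS t).mp hts i hi x hx)
    rw [hfn] at hc
    rw [Subgroup.mem_centralizer_iff]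
    intro x hxP
    exact (hc x hxP).symm
  haveI := hSnormal
  have hidx : ¬ p ∣ S.index := by
    intro hdvd
    rw [Subgroup.index_eq_card] at hdvd
    obtain ⟨x, hx⟩ := exists_prime_orderOf_dvd_card' (G := G ⧸ S) p hdvd
    obtain ⟨g, rfl⟩ := QuotientGroup.mk_surjective x
    have h1 : (QuotientGroup.mk g : G ⧸ S) ^ (p - 1) = 1 := by
      rw [← QuotientGroup.mk_pow, QuotientGroup.eq_one_iff]
      exact hS6 g
    have h2 := orderOf_dvd_of_pow_eq_one h1
    rw [hx] at h2
    have h3 := Nat.le_of_dvd (by have := hp.two_le; omega) h2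
    have := hp.two_le
    omega
  exact ⟨S, hCle, hSnormal, hSp, hidx, hS5, hS6⟩



lemma centralizer_normal [Group G] (N : Subgroup G) (hN : N.Normal) :
    (Subgroup.centralizer (N : Set G)).Normal := by
  constructor
  intro z hz g
  rw [Subgroup.mem_centralizer_iff] at hz ⊢
  intro s hs
  have h1 : g⁻¹ * s * g ∈ N := by
    have := hN.conj_mem s hs g⁻¹
    simpa using this
  have h2 := hz _ h1
  calc s * (g * z * g⁻¹) = g * ((g⁻¹ * s * g) * z) * g⁻¹ := by group
    _ = g * (z * (g⁻¹ * s * g)) * g⁻¹ := by rw [h2]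
    _ = g * z * g⁻¹ * s := by group

/-- A p-group acting on a nontrivial normal p-subgroup has a nontrivial fixed point. -/
lemma exists_fixed_point [Group G] [Finite G] {p : ℕ} (hp : p.Prime)
    (T H : Subgroup G) (hT : IsPGroup p T) (hHn : H.Normal) (hHp : IsPGroup p H)
    (hH1 : H ≠ ⊥) :
    ∃ x ∈ H, x ≠ 1 ∧ ∀ t ∈ T, t * x * t⁻¹ = x := by
  haveI := Fact.mk hp
  letI : MulAction T H :=
    { smul := fun t x => ⟨(t : G) * (x : G) * (t : G)⁻¹, hHn.conj_mem _ x.2 _⟩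
      one_smul := by
        intro x
        apply Subtype.ext
        show ((1 : T) : G) * (x : G) * ((1 : T) : G)⁻¹ = (x : G)
        simp
      mul_smul := by
        intro a b x
        apply Subtype.ext
        show ((a*b : T) : G) * x * ((a*b : T) : G)⁻¹ = (a : G) * ((b:G) * x * (b:G)⁻¹) * (a:G)⁻¹
        push_cast
        group }
  have hsmul : ∀ (t : T) (x : H), ((t • x : H) : G) = (t : G) * (x : G) * (t : G)⁻¹ :=
    fun t x => rfl
  have hmod := hT.card_modEq_card_fixedPoints (H : Type _)
  obtain ⟨k, hk⟩ := hHp.exists_card_eq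
  have hknz : k ≠ 0 := by
    intro h0
    rw [h0, pow_zero] at hk
    exact hH1 ((Subgroup.card_eq_one).mp hk)
  have hone : (1 : H) ∈ MulAction.fixedPoints T H := by
    intro t
    apply Subtype.ext
    rw [hsmul]
    simp
  have hdvd : p ∣ Nat.card (MulAction.fixedPoints T H) := by
    have h1 : p ∣ Nat.card H := by
      rw [hk]
      exact dvd_pow_self p hknz
    exact (Nat.modEq_zero_iff_dvd).mp ((hmod.symm.trans) (Nat.modEq_zero_iff_dvd.mpr h1))
  have hpos : 0 < Nat.card (MulAction.fixedPoints T H) :=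
    Nat.card_pos_iff.mpr ⟨⟨⟨1, hone⟩⟩, Set.Finite.to_subtype (Set.toFinite _)⟩
  have hlt : 1 < Nat.card (MulAction.fixedPoints T H) := by
    have := hp.two_le
    have := Nat.le_of_dvd hpos hdvd
    omega
  haveI : Finite (MulAction.fixedPoints T H) := Set.Finite.to_subtype (Set.toFinite _)
  rw [Finite.one_lt_card_iff_nontrivial] at hlt
  obtain ⟨b, hb⟩ := exists_ne (⟨⟨1, Subgroup.one_mem H⟩, hone⟩ : MulAction.fixedPoints T H)
  refine ⟨((b : H) : G), (b : H).2, ?_, ?_⟩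
  · intro h1
    apply hb
    apply Subtype.ext
    apply Subtype.ext
    exact h1
  · intro t ht
    have := b.2 ⟨t, ht⟩
    have h2 := congrArg (Subtype.val) this
    rw [hsmul] at h2
    exact h2

lemma char_sum {p : ℕ} [Fact p.Prime] (hp : p.Prime) (j : ℕ) (h0 : 0 < j) (hj : j < p - 1) :
    ∑ lam : (ZMod p)ˣ, ((lam ^ j : (ZMod p)ˣ) : ZMod p) = 0 := by
  obtain ⟨g, hg⟩ := IsCyclic.exists_generator (α := (ZMod p)ˣ)
  have hog : orderOf g = p - 1 := by
    rw [orderOf_eq_card_of_forall_mem_zpowers hg, Nat.card_eq_fintype_card, ZMod.card_units]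
  have hgj : (g ^ j : (ZMod p)ˣ) ≠ 1 := by
    intro h1
    have h2 := orderOf_dvd_of_pow_eq_one h1
    rw [hog] at h2
    have := Nat.le_of_dvd h0 h2
    omega
  set c : ZMod p := ((g ^ j : (ZMod p)ˣ) : ZMod p) with hc
  set S := ∑ lam : (ZMod p)ˣ, ((lam ^ j : (ZMod p)ˣ) : ZMod p) with hS
  have hshift : c * S = S := by
    rw [hS, Finset.mul_sum]
    calc ∑ lam : (ZMod p)ˣ, c * ((lam ^ j : (ZMod p)ˣ) : ZMod p)
        = ∑ lam : (ZMod p)ˣ, ((((g * lam) : (ZMod p)ˣ) ^ j : (ZMod p)ˣ) : ZMod p) := by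
          apply Finset.sum_congr rfl
          intro lam _
          rw [mul_pow, Units.val_mul]
      _ = ∑ lam : (ZMod p)ˣ, ((lam ^ j : (ZMod p)ˣ) : ZMod p) :=
          Fintype.sum_equiv (Equiv.mulLeft g) _ _ (fun lam => rfl)
  have hcne : c ≠ 1 := by
    intro h
    exact hgj (Units.ext h)
  have h4 : (1 - c) * S = 0 := by
    rw [sub_mul, one_mul, hshift, sub_self]
  rcases mul_eq_zero.mp h4 with h5 | h5
  · exact absurd (by linear_combination -h5 : c = 1) hcne
  · exact h5

lemma eigen {A : Type*} [CommGroup A] {p : ℕ} (hp : p.Prime)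
    (hA : ∀ x : A, x ^ p = 1) (σ : A →* A) (hσ : ∀ x : A, σ^[p-1] x = x)
    {x : A} (hx : x ≠ 1) :
    ∃ (y : A) (m : ℕ), y ≠ 1 ∧ σ y = y ^ m := by
  haveI := Fact.mk hp
  have hp1 : 1 ≤ p - 1 := by have := hp.two_le; omega
  have key : ∀ (y : A) (m k : ℕ), m ≡ k [MOD p] → y ^ m = y ^ k := by
    intro y m k h
    have hdvd : orderOf y ∣ p := orderOf_dvd_of_pow_eq_one (hA y)
    exact pow_eq_pow_iff_modEq.mpr (h.of_dvd hdvd)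
  have zp_mul : ∀ (y : A) (a b : ZMod p), (y ^ a.val) ^ b.val = y ^ (a * b).val := by
    intro y a b
    rw [← pow_mul]
    exact key y _ _ (by rw [ZMod.val_mul]; exact (Nat.mod_modEq _ p).symm)
  have zp_sum : ∀ (y : A) (s : Finset (ZMod p)ˣ) (F : (ZMod p)ˣ → ZMod p),
      y ^ (∑ i ∈ s, F i).val = ∏ i ∈ s, y ^ (F i).val := by
    intro y s F
    induction s using Finset.induction_on with
    | empty => simp [ZMod.val_zero]
    | insert a s hnot ih =>
      rw [Finset.sum_insert hnot, Finset.prod_insert hnot, ← ih, ← pow_add]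
      exact key y _ _ (by rw [ZMod.val_add]; exact (Nat.mod_modEq _ p))
  -- the twisted averages
  set w : (ZMod p)ˣ → A := fun lam =>
    ∏ j ∈ Finset.range (p-1), (σ^[j] x) ^ (((lam⁻¹ ^ j : (ZMod p)ˣ) : ZMod p)).val with hw
  set F : (ZMod p)ˣ → ℕ → A := fun lam j =>
    (σ^[j] x) ^ ((((lam : (ZMod p)ˣ) * lam⁻¹ ^ j : (ZMod p)ˣ) : ZMod p)).val with hF
  have hFshift : ∀ lam j, F lam (j+1) = (σ^[j+1] x) ^ (((lam⁻¹ ^ j : (ZMod p)ˣ) : ZMod p)).val := by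
    intro lam j
    have h5 : (lam : (ZMod p)ˣ) * lam⁻¹ ^ (j+1) = lam⁻¹ ^ j := by
      rw [pow_succ]
      group
    simp only [hF, h5]
  have hF0 : ∀ lam, F lam (p-1) = F lam 0 := by
    intro lam
    have hcard : (lam⁻¹ : (ZMod p)ˣ) ^ (p - 1) = 1 := by
      have h6 : (lam⁻¹ : (ZMod p)ˣ) ^ (Fintype.card (ZMod p)ˣ) = 1 := pow_card_eq_one
      rwa [ZMod.card_units] at h6
    rw [hF]
    simp only
    rw [hσ x, hcard, pow_zero, Function.iterate_zero_apply]
  have claim1 : ∀ lam, σ (w lam) = (w lam) ^ ((lam : ZMod p)).val := by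
    intro lam
    have hL : σ (w lam) = ∏ j ∈ Finset.range (p-1), F lam (j+1) := by
      rw [hw]
      simp only
      rw [map_prod]
      apply Finset.prod_congr rfl
      intro j _
      rw [map_pow, hFshift lam j, ← Function.iterate_succ_apply' σ j x]
    have hR : (w lam) ^ ((lam : ZMod p)).val = ∏ j ∈ Finset.range (p-1), F lam j := by
      rw [hw]
      simp only
      rw [← Finset.prod_pow]
      apply Finset.prod_congr rfl
      intro j _
      rw [zp_mul, hF]
      congr 2
      rw [← Units.val_mul, mul_comm (lam⁻¹ ^ j) lam]
    rw [hL, hR]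
    -- telescoping
    have t1 : ∏ j ∈ Finset.range (p-1+1), F lam j
        = (∏ j ∈ Finset.range (p-1), F lam (j+1)) * F lam 0 := Finset.prod_range_succ' _ _
    have t2 : ∏ j ∈ Finset.range (p-1+1), F lam j
        = (∏ j ∈ Finset.range (p-1), F lam j) * F lam (p-1) := Finset.prod_range_succ _ _
    have t3 := t1.symm.trans t2
    rw [hF0] at t3
    exact mul_right_cancel t3
  have claim2 : ∏ lam : (ZMod p)ˣ, w lam = x ^ (p - 1) := by
    rw [hw]
    simp only
    rw [Finset.prod_comm]
    have hinner : ∀ j ∈ Finset.range (p-1),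
        ∏ lam : (ZMod p)ˣ, (σ^[j] x) ^ (((lam⁻¹ ^ j : (ZMod p)ˣ) : ZMod p)).val
        = (σ^[j] x) ^ ((∑ lam : (ZMod p)ˣ, ((lam⁻¹ ^ j : (ZMod p)ˣ) : ZMod p))).val := by
      intro j _
      rw [zp_sum]
    rw [Finset.prod_congr rfl hinner]
    have hsum : ∀ j, ∑ lam : (ZMod p)ˣ, ((lam⁻¹ ^ j : (ZMod p)ˣ) : ZMod p)
        = ∑ lam : (ZMod p)ˣ, ((lam ^ j : (ZMod p)ˣ) : ZMod p) := by
      intro j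
      exact Fintype.sum_equiv (Equiv.inv (ZMod p)ˣ) _ _ (fun lam => rfl)
    have hzero : ∀ j ∈ Finset.range (p-1), j ≠ 0 →
        (σ^[j] x) ^ ((∑ lam : (ZMod p)ˣ, ((lam⁻¹ ^ j : (ZMod p)ˣ) : ZMod p))).val = 1 := by
      intro j hj hj0
      rw [hsum j, char_sum hp j (by omega) (Finset.mem_range.mp hj), ZMod.val_zero, pow_zero]
    have h00 : (σ^[0] x) ^ ((∑ lam : (ZMod p)ˣ, ((lam⁻¹ ^ 0 : (ZMod p)ˣ) : ZMod p))).val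
        = x ^ (p-1) := by
      have hs0 : (∑ lam : (ZMod p)ˣ, ((lam⁻¹ ^ 0 : (ZMod p)ˣ) : ZMod p)) = ((p-1 : ℕ) : ZMod p) := by
        simp only [pow_zero, Units.val_one, Finset.sum_const, Finset.card_univ, nsmul_eq_mul,
          mul_one, ZMod.card_units]
      rw [hs0, ZMod.val_natCast_of_lt (by have := hp.two_le; omega), Function.iterate_zero_apply]
    rw [Finset.prod_eq_single 0 hzero
      (fun h => absurd (Finset.mem_range.mpr (by omega)) h), h00]
  -- conclude
  by_contra hcon
  push_neg at hcon
  have hall : ∀ lam, w lam = 1 := by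
    intro lam
    by_contra h
    exact hcon _ _ h (claim1 lam)
  have h1 : x ^ (p-1) = 1 := by
    rw [← claim2]
    exact Finset.prod_eq_one (fun lam _ => hall lam)
  have h2 : x ^ p = 1 := hA x
  have h3 : x = 1 := by
    have hp0 : p - 1 + 1 = p := by have := hp.two_le; omega
    rw [← hp0, pow_succ, h1, one_mul] at h2
    exact h2
  exact hx h3



lemma backward [Group G] [Finite G] {p : ℕ} (hp : p.Prime) {P : Subgroup G}
    (hPn : P.Normal) (hPp : IsPGroup p P)
    (hspc : StrictlyPClosedOver p (Subgroup.centralizer (P : Set G)))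
    {K H : Subgroup G} (hcf : IsChiefFactor K H) (hHP : H ≤ P) :
    CyclicFactor K H := by
  haveI := Fact.mk hp
  obtain ⟨S, hCS, hSn, hSp, hSidx, hScomm, hSpow⟩ := hspc
  haveI hKn : K.Normal := hcf.1
  have hHn : H.Normal := hcf.2.1
  set mk : G →* G ⧸ K := QuotientGroup.mk' K with hmkdef
  have hmks : Function.Surjective mk := QuotientGroup.mk'_surjective K
  set Hb : Subgroup (G ⧸ K) := H.map mk with hHbdef
  set Sb : Subgroup (G ⧸ K) := S.map mk with hSbdef
  set Cb : Subgroup (G ⧸ K) := (Subgroup.centralizer (P : Set G)).map mk with hCbdef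
  haveI hHbn : Hb.Normal := hHn.map mk hmks
  haveI hSbn : Sb.Normal := hSn.map mk hmks
  have hCn : (Subgroup.centralizer (P : Set G)).Normal := centralizer_normal _ hPn
  haveI hCbn : Cb.Normal := hCn.map mk hmks
  -- chiefness transfers to the quotient
  have chiefQ : ∀ N : Subgroup (G ⧸ K), N.Normal → N ≤ Hb → N ≠ ⊥ → N = Hb := by
    intro N hNn hNH hNbot
    have hKN : K < N.comap mk := by
      constructor
      · intro k hk
        show mk k ∈ N
        have h1 : mk k = 1 := (QuotientGroup.eq_one_iff k).mpr hk
        rw [h1]; exact N.one_mem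
      · intro hle
        apply hNbot
        rw [eq_bot_iff]
        intro q hq
        obtain ⟨g, rfl⟩ := hmks q
        have hgK : g ∈ K := hle hq
        rw [Subgroup.mem_bot]
        exact (QuotientGroup.eq_one_iff g).mpr hgK
    have hNH' : N.comap mk ≤ H := by
      intro g hg
      have h1 : mk g ∈ Hb := hNH hg
      obtain ⟨h, hh, hhg⟩ := h1
      have h2 : h⁻¹ * g ∈ K := (QuotientGroup.eq (s := K)).mp hhg
      have h3 := H.mul_mem hh ((hcf.2.2.1.le) h2)
      rwa [← mul_assoc, mul_inv_cancel, one_mul] at h3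
    have hcomapN : N.comap mk = H := hcf.2.2.2 _ (hNn.comap mk) hKN hNH'
    rw [← Subgroup.map_comap_eq_self_of_surjective hmks N, hcomapN]
  have hHbp : IsPGroup p Hb := (hPp.to_le hHP).map mk
  have hHbne : Hb ≠ ⊥ := by
    obtain ⟨x, hxH, hxK⟩ := SetLike.exists_of_lt hcf.2.2.1
    intro hb
    have h1 : mk x ∈ Hb := ⟨x, hxH, rfl⟩
    rw [hb, Subgroup.mem_bot] at h1
    exact hxK ((QuotientGroup.eq_one_iff x).mp h1)
  have hCbcent : ∀ c ∈ Cb, ∀ x ∈ Hb, c * x = x * c := by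
    intro c hc x hx
    obtain ⟨c0, hc0, rfl⟩ := hc
    obtain ⟨x0, hx0, rfl⟩ := hx
    have h1 : x0 * c0 = c0 * x0 := Subgroup.mem_centralizer_iff.mp hc0 x0 (hHP hx0)
    show mk c0 * mk x0 = mk x0 * mk c0
    rw [← map_mul, ← map_mul, h1]
  have hSbcommQ : ∀ a b : G ⧸ K, a * b * a⁻¹ * b⁻¹ ∈ Sb := by
    intro a b
    obtain ⟨g, rfl⟩ := hmks a
    obtain ⟨h, rfl⟩ := hmks b
    exact ⟨g * h * g⁻¹ * h⁻¹, hScomm g h, by simp [map_mul, map_inv]⟩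
  have hSbpow : ∀ a : G ⧸ K, a ^ (p-1) ∈ Sb := by
    intro a
    obtain ⟨g, rfl⟩ := hmks a
    exact ⟨g ^ (p-1), hSpow g, by simp [map_pow]⟩
  have hSbp : ∀ s ∈ Sb, ∃ m : ℕ, s ^ p ^ m ∈ Cb := by
    intro s hs
    obtain ⟨s0, hs0, rfl⟩ := hs
    obtain ⟨m, hm⟩ := hSp s0 hs0
    exact ⟨m, ⟨s0 ^ p ^ m, hm, by simp [map_pow]⟩⟩
  -- Sylow decomposition of Sb over Cb
  set C'' : Subgroup ↥Sb := Cb.subgroupOf Sb with hC''def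
  haveI hC''n : C''.Normal := hCbn.subgroupOf Sb
  have hYq : IsPGroup p (↥Sb ⧸ C'') := by
    intro z
    obtain ⟨y, rfl⟩ := QuotientGroup.mk_surjective z
    obtain ⟨m, hm⟩ := hSbp (y : G ⧸ K) y.2
    refine ⟨m, ?_⟩
    rw [← QuotientGroup.mk_pow, QuotientGroup.eq_one_iff, Subgroup.mem_subgroupOf]
    push_cast
    exact hm
  obtain ⟨j, hj⟩ := hYq.exists_card_eq
  have hT'ne : Nonempty (Sylow p ↥Sb) := Sylow.nonempty
  obtain ⟨T'⟩ := hT'ne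
  have hT'idx : ¬ p ∣ (T' : Subgroup ↥Sb).index := T'.not_dvd_index
  set R : Subgroup ↥Sb := (T' : Subgroup ↥Sb) ⊔ C'' with hRdef
  have hRidx1 : R.index ∣ (T' : Subgroup ↥Sb).index := Subgroup.index_dvd_of_le le_sup_left
  have hRidx2 : R.index ∣ p ^ j := by
    have h2 : C''.index = p ^ j := by rw [Subgroup.index_eq_card, hj]
    have h1 : R.index ∣ C''.index := Subgroup.index_dvd_of_le le_sup_right
    rwa [h2] at h1
  have hRtop : R = ⊤ := by
    obtain ⟨i, hile, hieq⟩ := (Nat.dvd_prime_pow hp).mp hRidx2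
    rcases Nat.eq_zero_or_pos i with rfl | hipos
    · rwa [pow_zero, Subgroup.index_eq_one] at hieq
    · exfalso
      apply hT'idx
      refine dvd_trans ?_ hRidx1
      rw [hieq]
      exact dvd_pow_self p hipos.ne'
  set T : Subgroup (G ⧸ K) := (T' : Subgroup ↥Sb).map Sb.subtype with hTdef
  have hTp : IsPGroup p T := T'.2.map _
  obtain ⟨xb, hxbH, hxbne, hxbfix⟩ := exists_fixed_point hp T Hb hTp hHbn hHbp hHbne
  have hfixS : ∀ s ∈ Sb, s * xb * s⁻¹ = xb := by
    intro s hs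
    have hy : (⟨s, hs⟩ : ↥Sb) ∈ R := hRtop ▸ Subgroup.mem_top _
    rw [hRdef] at hy
    have hy2 : (⟨s, hs⟩ : ↥Sb) ∈ ((T' : Subgroup ↥Sb) : Set ↥Sb) * (C'' : Set ↥Sb) := by
      rw [← Subgroup.mul_normal]
      exact hy
    obtain ⟨t, ht, c, hc, htc⟩ := Set.mem_mul.mp hy2
    have hcoe : (t : G ⧸ K) * (c : G ⧸ K) = s := by
      rw [← Subgroup.coe_mul, htc]
    have hcC : (c : G ⧸ K) ∈ Cb := (Subgroup.mem_subgroupOf).mp hc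
    have htT : (t : G ⧸ K) ∈ T := ⟨t, ht, rfl⟩
    have h1 : (c : G ⧸ K) * xb * (c : G ⧸ K)⁻¹ = xb := by
      have h2 := hCbcent _ hcC xb hxbH
      calc (c : G ⧸ K) * xb * (c : G ⧸ K)⁻¹ = (xb * c) * (c : G ⧸ K)⁻¹ := by rw [h2]
        _ = xb := by group
    have h2 := hxbfix _ htT
    rw [← hcoe]
    calc (t : G⧸K) * c * xb * ((t : G⧸K) * c)⁻¹
        = (t : G⧸K) * ((c : G⧸K) * xb * (c : G⧸K)⁻¹) * (t : G⧸K)⁻¹ := by group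
      _ = (t : G⧸K) * xb * (t : G⧸K)⁻¹ := by rw [h1]
      _ = xb := h2
  -- Sb centralizes Hb
  have hScent : ∀ s ∈ Sb, ∀ x ∈ Hb, s * x = x * s := by
    have hDeq : Subgroup.centralizer (Sb : Set (G⧸K)) ⊓ Hb = Hb := by
      apply chiefQ
      · constructor
        intro x hx g
        rw [Subgroup.mem_inf] at hx ⊢
        exact ⟨(centralizer_normal _ hSbn).conj_mem _ hx.1 g, hHbn.conj_mem _ hx.2 g⟩
      · exact inf_le_right
      · intro hbot
        have hxbD : xb ∈ Subgroup.centralizer (Sb : Set (G⧸K)) ⊓ Hb := by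
          rw [Subgroup.mem_inf]
          refine ⟨Subgroup.mem_centralizer_iff.mpr (fun s hs => ?_), hxbH⟩
          have h1 := hfixS s hs
          calc s * xb = (s * xb * s⁻¹) * s := by group
            _ = xb * s := by rw [h1]
        rw [hbot, Subgroup.mem_bot] at hxbD
        exact hxbne hxbD
    intro s hs x hx
    have h1 : x ∈ Subgroup.centralizer (Sb : Set (G⧸K)) ⊓ Hb := hDeq.symm ▸ hx
    exact (Subgroup.mem_inf.mp h1).1 s hs
  -- Hb is abelian
  have hcommH : ∀ x ∈ Hb, ∀ y ∈ Hb, x * y = y * x := by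
    have hZeq : Subgroup.centralizer (Hb : Set (G⧸K)) ⊓ Hb = Hb := by
      apply chiefQ
      · constructor
        intro x hx g
        rw [Subgroup.mem_inf] at hx ⊢
        exact ⟨(centralizer_normal _ hHbn).conj_mem _ hx.1 g, hHbn.conj_mem _ hx.2 g⟩
      · exact inf_le_right
      · intro hbot
        haveI : Nontrivial ↥Hb := (Subgroup.nontrivial_iff_ne_bot Hb).mpr hHbne
        haveI := hHbp.center_nontrivial
        obtain ⟨z, hzne⟩ := exists_ne (1 : Subgroup.center ↥Hb)
        have hzc : ((z : ↥Hb) : G⧸K) ∈ Subgroup.centralizer (Hb : Set (G⧸K)) := by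
          rw [Subgroup.mem_centralizer_iff]
          intro h hh
          have h1 := (Subgroup.mem_center_iff.mp z.2) ⟨h, hh⟩
          exact congrArg Subtype.val h1
        have h2 : ((z : ↥Hb) : G⧸K) ∈ Subgroup.centralizer (Hb : Set (G⧸K)) ⊓ Hb :=
          Subgroup.mem_inf.mpr ⟨hzc, (z : ↥Hb).2⟩
        rw [hbot, Subgroup.mem_bot] at h2
        exact hzne (Subtype.ext (Subtype.ext h2))
    intro x hx y hy
    have h1 : x ∈ Subgroup.centralizer (Hb : Set (G⧸K)) ⊓ Hb := hZeq.symm ▸ hx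
    exact ((Subgroup.mem_inf.mp h1).1 y hy).symm
  -- Hb has exponent p
  have hexp : ∀ x ∈ Hb, x ^ p = 1 := by
    -- a nontrivial element of order p
    obtain ⟨n0, hn0⟩ := hHbp ⟨xb, hxbH⟩
    have hxbpow : xb ^ p ^ n0 = 1 := by
      have h1 := congrArg Subtype.val hn0
      push_cast at h1
      exact h1
    obtain ⟨k, hkle, hk⟩ := (Nat.dvd_prime_pow hp).mp (orderOf_dvd_of_pow_eq_one hxbpow)
    have hk1 : 1 ≤ k := by
      rcases Nat.eq_zero_or_pos k with rfl | h
      · rw [pow_zero] at hk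
        exact absurd (orderOf_eq_one_iff.mp hk) hxbne
      · exact h
    set y0 := xb ^ p ^ (k-1) with hy0def
    have hy0ne : y0 ≠ 1 := by
      intro h1
      have h2 := orderOf_dvd_of_pow_eq_one h1
      rw [hk] at h2
      have h3 := (Nat.pow_dvd_pow_iff_le_right hp.one_lt).mp h2
      omega
    have hy0p : y0 ^ p = 1 := by
      rw [hy0def, ← pow_mul, ← pow_succ]
      have h1 : k - 1 + 1 = k := by omega
      rw [h1, ← hk, pow_orderOf_eq_one]
    set W : Subgroup (G ⧸ K) :=
      { carrier := {x | x ∈ Hb ∧ x ^ p = 1}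
        one_mem' := ⟨Hb.one_mem, one_pow p⟩
        mul_mem' := by
          rintro a b ⟨haH, hap⟩ ⟨hbH, hbp⟩
          refine ⟨Hb.mul_mem haH hbH, ?_⟩
          have hcm : Commute a b := hcommH a haH b hbH
          rw [hcm.mul_pow, hap, hbp, one_mul]
        inv_mem' := by
          rintro a ⟨haH, hap⟩
          exact ⟨Hb.inv_mem haH, by rw [inv_pow, hap, inv_one]⟩ } with hWdef
    have hWeq : W = Hb := by
      apply chiefQ
      · constructor
        rintro x ⟨hxH, hxp⟩ g
        refine ⟨hHbn.conj_mem _ hxH g, ?_⟩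
        rw [conj_pow, hxp]
        group
      · rintro x ⟨hxH, _⟩
        exact hxH
      · intro hbot
        have : y0 ∈ W := ⟨Hb.pow_mem hxbH _, hy0p⟩
        rw [hbot, Subgroup.mem_bot] at this
        exact hy0ne this
    intro x hx
    have h1 : x ∈ W := hWeq.symm ▸ hx
    exact h1.2
  -- every element of the quotient acts on Hb by a universal power
  have hconj : ∀ a : G ⧸ K, ∃ m : ℕ, ∀ x ∈ Hb, a * x * a⁻¹ = x ^ m := by
    intro a
    letI : CommGroup ↥Hb :=
      { (inferInstance : Group ↥Hb) with
        mul_comm := by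
          intro u v
          apply Subtype.ext
          exact hcommH u u.2 v v.2 }
    set σ : ↥Hb →* ↥Hb :=
      { toFun := fun z => ⟨a * (z : G⧸K) * a⁻¹, hHbn.conj_mem _ z.2 a⟩
        map_one' := by
          apply Subtype.ext
          show a * ((1 : ↥Hb) : G⧸K) * a⁻¹ = ((1 : ↥Hb) : G⧸K)
          push_cast
          group
        map_mul' := by
          intro u v
          apply Subtype.ext
          show a * ((u * v : ↥Hb) : G⧸K) * a⁻¹
            = (a * (u : G⧸K) * a⁻¹) * (a * (v : G⧸K) * a⁻¹)
          push_cast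
          group } with hσdef
    have hAexp : ∀ z : ↥Hb, z ^ p = 1 := by
      intro z
      apply Subtype.ext
      push_cast
      exact hexp _ z.2
    have hiter : ∀ (j : ℕ) (z : ↥Hb), ((σ^[j] z : ↥Hb) : G ⧸ K) = a ^ j * (z : G⧸K) * (a ^ j)⁻¹ := by
      intro j
      induction j with
      | zero => intro z; simp
      | succ j ih =>
        intro z
        rw [Function.iterate_succ_apply']
        show a * ((σ^[j] z : ↥Hb) : G⧸K) * a⁻¹ = _
        rw [ih z, pow_succ']
        group
    have hσp : ∀ z : ↥Hb, (⇑σ)^[p-1] z = z := by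
      intro z
      apply Subtype.ext
      rw [hiter (p-1) z]
      have hmem : a ^ (p-1) ∈ Sb := hSbpow a
      have h1 := hScent _ hmem (z : G⧸K) z.2
      calc a^(p-1) * (z:G⧸K) * (a^(p-1))⁻¹ = ((z:G⧸K) * a^(p-1)) * (a^(p-1))⁻¹ := by rw [h1]
        _ = z := by group
    have hxbne' : (⟨xb, hxbH⟩ : ↥Hb) ≠ 1 := by
      intro h
      exact hxbne (congrArg Subtype.val h)
    obtain ⟨y, m, hyne, hy⟩ := eigen hp hAexp σ hσp hxbne'
    refine ⟨m, ?_⟩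
    set E : Subgroup (G ⧸ K) :=
      { carrier := {u | u ∈ Hb ∧ a * u * a⁻¹ = u ^ m}
        one_mem' := ⟨Hb.one_mem, by group⟩
        mul_mem' := by
          rintro u v ⟨huH, hu⟩ ⟨hvH, hv⟩
          refine ⟨Hb.mul_mem huH hvH, ?_⟩
          have hcm : Commute u v := hcommH u huH v hvH
          calc a * (u * v) * a⁻¹ = (a * u * a⁻¹) * (a * v * a⁻¹) := by group
            _ = u ^ m * v ^ m := by rw [hu, hv]
            _ = (u * v) ^ m := (hcm.mul_pow m).symm
        inv_mem' := by
          rintro u ⟨huH, hu⟩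
          refine ⟨Hb.inv_mem huH, ?_⟩
          calc a * u⁻¹ * a⁻¹ = (a * u * a⁻¹)⁻¹ := by group
            _ = (u ^ m)⁻¹ := by rw [hu]
            _ = (u⁻¹) ^ m := by rw [inv_pow] } with hEdef
    have hEeq : E = Hb := by
      apply chiefQ
      · constructor
        rintro u ⟨huH, hu⟩ q
        refine ⟨hHbn.conj_mem _ huH q, ?_⟩
        have hc : q⁻¹ * a * q * a⁻¹ ∈ Sb := by
          have h1 := hSbcommQ q⁻¹ a
          rwa [inv_inv] at h1
        have haU : a * u * a⁻¹ ∈ Hb := hHbn.conj_mem _ huH a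
        have h2 : (q⁻¹ * a * q) * u * (q⁻¹ * a * q)⁻¹ = a * u * a⁻¹ := by
          have h3 := hScent _ hc _ haU
          calc (q⁻¹ * a * q) * u * (q⁻¹ * a * q)⁻¹
              = (q⁻¹ * a * q * a⁻¹) * (a * u * a⁻¹) * (q⁻¹ * a * q * a⁻¹)⁻¹ := by group
            _ = ((a * u * a⁻¹) * (q⁻¹ * a * q * a⁻¹)) * (q⁻¹ * a * q * a⁻¹)⁻¹ := by rw [h3]
            _ = a * u * a⁻¹ := by group
        calc a * (q * u * q⁻¹) * a⁻¹
            = q * ((q⁻¹ * a * q) * u * (q⁻¹ * a * q)⁻¹) * q⁻¹ := by group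
          _ = q * (a * u * a⁻¹) * q⁻¹ := by rw [h2]
          _ = q * u ^ m * q⁻¹ := by rw [hu]
          _ = (q * u * q⁻¹) ^ m := by rw [conj_pow]
      · rintro u ⟨huH, _⟩
        exact huH
      · intro hbot
        have hyE : ((y : ↥Hb) : G⧸K) ∈ E := by
          refine ⟨(y : ↥Hb).2, ?_⟩
          calc a * ((y : ↥Hb) : G⧸K) * a⁻¹ = ((σ y : ↥Hb) : G⧸K) := rfl
            _ = (((y ^ m : ↥Hb)) : G⧸K) := by rw [hy]
            _ = ((y : ↥Hb) : G⧸K) ^ m := by push_cast; rfl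
        rw [hbot, Subgroup.mem_bot] at hyE
        exact hyne (Subtype.ext hyE)
    intro x hx
    have h1 : x ∈ E := hEeq.symm ▸ hx
    exact h1.2
  -- finally: Hb is generated by xb
  have hMeq : Subgroup.zpowers xb = Hb := by
    apply chiefQ
    · constructor
      intro u hu q
      obtain ⟨k, hk⟩ := Subgroup.mem_zpowers_iff.mp hu
      obtain ⟨m, hm⟩ := hconj q
      rw [Subgroup.mem_zpowers_iff]
      refine ⟨(m : ℤ) * k, ?_⟩
      rw [← hk]
      have h1 : q * xb ^ k * q⁻¹ = (q * xb * q⁻¹) ^ k := conj_zpow.symm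
      rw [h1, hm xb hxbH, ← zpow_natCast, ← zpow_mul]
    · rw [Subgroup.zpowers_le]
      exact hxbH
    · intro hbot
      apply hxbne
      have h1 : xb ∈ Subgroup.zpowers xb := Subgroup.mem_zpowers xb
      rw [hbot, Subgroup.mem_bot] at h1
      exact h1
  obtain ⟨g0, hg0H, hg0⟩ : ∃ g0 ∈ H, mk g0 = xb := by
    obtain ⟨g0, hg0, he⟩ := hxbH
    exact ⟨g0, hg0, he⟩
  refine ⟨g0, hg0H, ?_⟩
  intro h hh
  have h1 : mk h ∈ Subgroup.zpowers xb := by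
    rw [hMeq]
    exact ⟨h, hh, rfl⟩
  obtain ⟨k, hk⟩ := Subgroup.mem_zpowers_iff.mp h1
  refine ⟨k, ?_⟩
  have h2 : mk (g0 ^ k) = mk h := by
    rw [map_zpow, hg0, hk]
  exact (QuotientGroup.eq (s := K)).mp h2

end Stmt3


/-- A normal `p`-subgroup `P` of `G` is hypercyclically embedded in `G`
iff `G/C_G(P)` is strictly `p`-closed. -/
theorem stmt3 [Group G] [Finite G] (p : ℕ) (hp : p.Prime) (P : Subgroup G)
    (hPn : P.Normal) (hPp : IsPGroup p P) :
    (∀ K H : Subgroup G, IsChiefFactor K H → H ≤ P → CyclicFactor K H) ↔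
      StrictlyPClosedOver p (Subgroup.centralizer (P : Set G)) := by
  constructor
  · intro hhyp
    exact Stmt3.forward hp hPn hPp hhyp
  · intro hspc K H hcf hHP
    exact Stmt3.backward hp hPn hPp hspc hcf hHP
end

section
/- If a normal p-subgroup P of a finite group G is hypercyclically embedded in G, then the quotient G/C, where C is the intersection of the centralizers C_G(H/K) over all chief factors H/K of G below P, is abelian of exponent dividing p−1. -/
open Subgroup Pointwise

variable {G : Type*}

section Aux

variable {G : Type*} [Group G]

/-- `g` acts on `H` mod `K` as the `m`-th power map. -/
private def ActsAs (K H : Subgroup G) (g : G) (m : ℤ) : Prop :=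
  ∀ h : G, h ∈ H → (h ^ m)⁻¹ * (g * h * g⁻¹) ∈ K

private lemma acts_mul {K H : Subgroup G} (hKn : K.Normal) {g₁ g₂ : G} {m₁ m₂ : ℤ}
    (h₁ : ActsAs K H g₁ m₁) (h₂ : ActsAs K H g₂ m₂) : ActsAs K H (g₁ * g₂) (m₁ * m₂) := by
  intro h hh
  have hx := h₂ h hh
  have hy := h₁ _ (H.zpow_mem hh m₂)
  have hz := K.mul_mem hy (hKn.conj_mem _ hx g₁)
  convert hz using 1
  group

private lemma acts_one_one {K H : Subgroup G} : ActsAs K H 1 1 := by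
  intro h hh
  convert K.one_mem using 1
  group

private lemma acts_pow {K H : Subgroup G} (hKn : K.Normal) {g : G} {m : ℤ}
    (hg : ActsAs K H g m) (n : ℕ) : ActsAs K H (g ^ n) (m ^ n) := by
  induction n with
  | zero => simpa using acts_one_one
  | succ k ih =>
      rw [pow_succ, pow_succ]
      exact acts_mul hKn ih hg

private lemma acts_congr {p : ℕ} {K H : Subgroup G} {g : G} {m m' : ℤ}
    (hpowK : ∀ h : G, h ∈ H → h ^ (p : ℤ) ∈ K)
    (hg : ActsAs K H g m) (hd : (p : ℤ) ∣ (m' - m)) : ActsAs K H g m' := by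
  intro h hh
  obtain ⟨t, ht⟩ := hd
  have h1 : h ^ (m' - m) ∈ K := by
    rw [ht, zpow_mul]
    exact K.zpow_mem (hpowK h hh) t
  have := K.mul_mem (K.inv_mem h1) (hg h hh)
  convert this using 1
  group

set_option maxHeartbeats 1600000 in
/-- Key lemma: the conclusion of `stmt4` for a single chief factor of order `p`. -/
private lemma chief_key {p : ℕ} (hp : p.Prime) {K H : Subgroup G}
    (hKn : K.Normal) (hHn : H.Normal) (hKH : K < H)
    (hidx : (K.subgroupOf H).index = p) :
    (∀ a b : G, ∀ h ∈ H,
        (a * b * a⁻¹ * b⁻¹) * h * (a * b * a⁻¹ * b⁻¹)⁻¹ * h⁻¹ ∈ K) ∧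
    (∀ a : G, ∀ h ∈ H, (a ^ (p - 1)) * h * (a ^ (p - 1))⁻¹ * h⁻¹ ∈ K) := by
  haveI : Fact p.Prime := ⟨hp⟩
  haveI : (K.subgroupOf H).Normal := hKn.subgroupOf H
  have hcard : Nat.card (H ⧸ K.subgroupOf H) = p := hidx
  haveI : IsCyclic (H ⧸ K.subgroupOf H) := isCyclic_of_prime_card hcard
  obtain ⟨h₀, hh₀, hh₀K⟩ := SetLike.exists_of_lt hKH
  -- every element of `H` has its `p`-th power in `K`
  have hpowK : ∀ h : G, h ∈ H → h ^ (p : ℤ) ∈ K := by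
    intro h hh
    have h1 : ((⟨h, hh⟩ : H) : H ⧸ K.subgroupOf H) ^ p = 1 := by
      rw [← hcard]; exact pow_card_eq_one'
    rw [← QuotientGroup.mk_pow, QuotientGroup.eq_one_iff, Subgroup.mem_subgroupOf] at h1
    simpa [zpow_natCast] using h1
  -- every `g : G` acts as some power map
  have hex : ∀ g : G, ∃ m : ℤ, ActsAs K H g m := by
    intro g
    have hle : K.subgroupOf H ≤ (K.subgroupOf H).comap (MulAut.conjNormal g).toMonoidHom := by
      intro x hx
      rw [Subgroup.mem_subgroupOf] at hx
      rw [Subgroup.mem_comap, Subgroup.mem_subgroupOf]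
      show ((MulAut.conjNormal g x : H) : G) ∈ K
      rw [MulAut.conjNormal_apply]
      exact hKn.conj_mem _ hx g
    obtain ⟨m, hm⟩ := MonoidHom.map_cyclic
      (QuotientGroup.map (K.subgroupOf H) (K.subgroupOf H)
        (MulAut.conjNormal g).toMonoidHom hle)
    refine ⟨m, fun h hh => ?_⟩
    have h1 := hm ((⟨h, hh⟩ : H) : H ⧸ K.subgroupOf H)
    rw [QuotientGroup.map_mk, ← QuotientGroup.mk_zpow, QuotientGroup.eq] at h1
    rw [Subgroup.mem_subgroupOf] at h1
    simp only [Subgroup.coe_mul, InvMemClass.coe_inv, SubgroupClass.coe_zpow,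
      MulEquiv.coe_toMonoidHom, MulAut.conjNormal_apply] at h1
    have h2 : (g * h * g⁻¹)⁻¹ * h ^ m ∈ K := h1
    have h4 := K.inv_mem h2
    rw [mul_inv_rev, inv_inv] at h4
    exact h4
  -- `g` cannot act as a power map with exponent divisible by `p`
  have hne : ∀ g : G, ∀ m : ℤ, ActsAs K H g m → ¬ (p : ℤ) ∣ m := by
    rintro g m hg ⟨t, rfl⟩
    have hx := hg h₀ hh₀
    have h1 : h₀ ^ ((p : ℤ) * t) ∈ K := by
      rw [zpow_mul]; exact K.zpow_mem (hpowK h₀ hh₀) t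
    have h2 := K.mul_mem h1 hx
    rw [mul_inv_cancel_left] at h2
    have h3 := hKn.conj_mem _ h2 g⁻¹
    apply hh₀K
    convert h3 using 1
    group
  -- if `1` acts as the `k`-th power map then `k ≡ 1 (mod p)`
  have hone : ∀ k : ℤ, ActsAs K H 1 k → (p : ℤ) ∣ (1 - k) := by
    intro k hk
    have hx := hk h₀ hh₀
    have h1 : h₀ ^ ((1 : ℤ) - k) ∈ K := by
      have : h₀ ^ ((1 : ℤ) - k) = (h₀ ^ k)⁻¹ * (1 * h₀ * 1⁻¹) := by group
      rw [this]; exact hx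
    have hq0 : ((⟨h₀, hh₀⟩ : H) : H ⧸ K.subgroupOf H) ≠ 1 := by
      intro hc
      rw [QuotientGroup.eq_one_iff, Subgroup.mem_subgroupOf] at hc
      exact hh₀K hc
    have hdvd : orderOf ((⟨h₀, hh₀⟩ : H) : H ⧸ K.subgroupOf H) ∣ p := by
      rw [← hcard]; exact _root_.orderOf_dvd_natCard _
    have hord : orderOf ((⟨h₀, hh₀⟩ : H) : H ⧸ K.subgroupOf H) = p := by
      rcases hp.eq_one_or_self_of_dvd _ hdvd with h | h
      · exact absurd (orderOf_eq_one_iff.mp h) hq0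
      · exact h
    have hz : ((⟨h₀, hh₀⟩ : H) : H ⧸ K.subgroupOf H) ^ ((1 : ℤ) - k) = 1 := by
      rw [← QuotientGroup.mk_zpow]
      refine (QuotientGroup.eq_one_iff _).mpr ?_
      rw [Subgroup.mem_subgroupOf]
      show ((⟨h₀, hh₀⟩ : H) : G) ^ ((1 : ℤ) - k) ∈ K
      exact h1
    have := orderOf_dvd_iff_zpow_eq_one.mpr hz
    rwa [hord] at this
  constructor
  · intro a b h hh
    obtain ⟨ma, ha⟩ := hex a
    obtain ⟨mb, hb⟩ := hex b
    obtain ⟨ma', ha'⟩ := hex a⁻¹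
    obtain ⟨mb', hb'⟩ := hex b⁻¹
    have h1 : ActsAs K H 1 (ma * ma') := by
      have := acts_mul hKn ha ha'
      rwa [mul_inv_cancel] at this
    have h2 : ActsAs K H 1 (mb * mb') := by
      have := acts_mul hKn hb hb'
      rwa [mul_inv_cancel] at this
    have d1 := hone _ h1
    have d2 := hone _ h2
    have hw : ActsAs K H (a * b * a⁻¹ * b⁻¹) (ma * mb * ma' * mb') :=
      acts_mul hKn (acts_mul hKn (acts_mul hKn ha hb) ha') hb'
    have dd : (p : ℤ) ∣ (1 - ma * mb * ma' * mb') := by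
      have : (1 : ℤ) - ma * mb * ma' * mb' =
          (1 - ma * ma') * (mb * mb') + (1 - mb * mb') := by ring
      rw [this]
      exact dvd_add (d1.mul_right _) d2
    have hw1 : ActsAs K H (a * b * a⁻¹ * b⁻¹) 1 := acts_congr hpowK hw dd
    have hx := hw1 h hh
    rw [zpow_one] at hx
    have h2' := hKn.conj_mem _ hx h
    convert h2' using 1
    group
  · intro a h hh
    obtain ⟨m, hm⟩ := hex a
    have hnd := hne a m hm
    have hpw : ActsAs K H (a ^ (p - 1)) (m ^ (p - 1)) := acts_pow hKn hm (p - 1)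
    have dd : (p : ℤ) ∣ (1 - m ^ (p - 1)) := by
      rw [← ZMod.intCast_zmod_eq_zero_iff_dvd]
      have h0 : (m : ZMod p) ≠ 0 := fun hc =>
        hnd ((ZMod.intCast_zmod_eq_zero_iff_dvd m p).mp hc)
      have h1 : (m : ZMod p) ^ (p - 1) = 1 := ZMod.pow_card_sub_one_eq_one h0
      push_cast
      rw [h1]
      ring
    have hw1 : ActsAs K H (a ^ (p - 1)) 1 := acts_congr hpowK hpw dd
    have hx := hw1 h hh
    rw [zpow_one] at hx
    have h2' := hKn.conj_mem _ hx h
    convert h2' using 1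
    group

end Aux

/-- If a normal `p`-subgroup `P` is hypercyclically embedded in `G`
(every chief factor of `G` below `P` has order `p`), then `G/C`, where `C` is the
intersection of the centralizers of the chief factors of `G` below `P`, is abelian
of exponent dividing `p - 1`; i.e. every commutator `[a,b]` and every `a^(p-1)`
centralizes every chief factor of `G` below `P`. -/
theorem stmt4 [Group G] [Finite G] (p : ℕ) (hp : p.Prime) (P : Subgroup G)
    (hPn : P.Normal) (hPp : IsPGroup p P)
    (hhe : ∀ K H : Subgroup G, IsChiefFactor K H → H ≤ P → (K.subgroupOf H).index = p) :
    (∀ a b : G, ∀ K H : Subgroup G, IsChiefFactor K H → H ≤ P →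
        ∀ h ∈ H, (a * b * a⁻¹ * b⁻¹) * h * (a * b * a⁻¹ * b⁻¹)⁻¹ * h⁻¹ ∈ K) ∧
    (∀ a : G, ∀ K H : Subgroup G, IsChiefFactor K H → H ≤ P →
        ∀ h ∈ H, (a ^ (p - 1)) * h * (a ^ (p - 1))⁻¹ * h⁻¹ ∈ K) := by
  constructor
  · intro a b K H hcf hHP h hh
    exact (chief_key hp hcf.1 hcf.2.1 hcf.2.2.1 (hhe K H hcf hHP)).1 a b h hh
  · intro a K H hcf hHP h hh
    exact (chief_key hp hcf.1 hcf.2.1 hcf.2.2.1 (hhe K H hcf hHP)).2 a h hh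
end

section
/- Let E be a normal subgroup of a finite group G and P a Sylow p-subgroup of E such that gcd(p−1, |G|) = 1. If G is p-supersoluble, then E is p-nilpotent and E/O_{p'}(E) ≤ Z_∞(G/O_{p'}(E)). -/
open Subgroup Pointwise

variable {G : Type*}

/-! ### Auxiliary lemmas -/

section Aux

variable {X : Type*}

lemma card_map_mk'_aux [Group X] (K H : Subgroup X) [K.Normal] :
    Nat.card (H.map (QuotientGroup.mk' K)) = (K.subgroupOf H).index := by
  have hker : ((QuotientGroup.mk' K).comp H.subtype).ker = K.subgroupOf H := by
    rw [← MonoidHom.comap_ker, QuotientGroup.ker_mk']; rfl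
  have hrange : ((QuotientGroup.mk' K).comp H.subtype).range = H.map (QuotientGroup.mk' K) := by
    rw [MonoidHom.range_comp, Subgroup.range_subtype]
  calc Nat.card (H.map (QuotientGroup.mk' K))
      = Nat.card ((QuotientGroup.mk' K).comp H.subtype).range := by rw [hrange]
    _ = Nat.card (↥H ⧸ ((QuotientGroup.mk' K).comp H.subtype).ker) :=
        (Nat.card_congr (QuotientGroup.quotientKerEquivRange _).toEquiv).symm
    _ = (K.subgroupOf H).index := by rw [hker]; rfl

lemma central_of_index_p [Group X] [Finite X] {p : ℕ} (hp : p.Prime)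
    (hco : Nat.Coprime (p - 1) (Nat.card X)) {K H : Subgroup X}
    (hK : K.Normal) (hH : H.Normal) (hidx : (K.subgroupOf H).index = p) :
    ∀ h ∈ H, ∀ g : X, h * g * h⁻¹ * g⁻¹ ∈ K := by
  haveI := hK
  haveI := Fact.mk hp
  have key : ∀ g : X, ∀ h ∈ H, g * h * g⁻¹ * h⁻¹ ∈ K := by
    intro g h hh
    set Q := H.map (QuotientGroup.mk' K) with hQdef
    haveI : Q.Normal := hH.map _ (QuotientGroup.mk'_surjective K)
    have hcard : Nat.card Q = p := by rw [hQdef, card_map_mk'_aux K H, hidx]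
    haveI : IsCyclic Q := isCyclic_of_prime_card hcard
    set ψ : X ⧸ K →* MulAut Q := MulAut.conjNormal with hψ
    set α := ψ (QuotientGroup.mk' K g) with hα
    have h1 : orderOf α ∣ Nat.card X := by
      calc orderOf α ∣ orderOf (QuotientGroup.mk' K g) := orderOf_map_dvd ψ _
        _ ∣ orderOf g := orderOf_map_dvd _ g
        _ ∣ Nat.card X := orderOf_dvd_natCard g
    have h2 : orderOf α ∣ p - 1 := by
      have h3 := orderOf_dvd_natCard α
      rwa [IsCyclic.card_mulAut, hcard, Nat.totient_prime hp] at h3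
    have hα1 : α = 1 := by
      rw [← orderOf_eq_one_iff]
      have h4 := Nat.dvd_gcd h2 h1
      rwa [Nat.Coprime.gcd_eq_one hco, Nat.dvd_one] at h4
    set q : Q := ⟨QuotientGroup.mk' K h, Subgroup.mem_map_of_mem _ hh⟩ with hq
    have h5 : ((α q : Q) : X ⧸ K) = QuotientGroup.mk' K g * QuotientGroup.mk' K h
        * (QuotientGroup.mk' K g)⁻¹ := by
      rw [hα, hψ]
      exact MulAut.conjNormal_apply _ _
    rw [hα1] at h5
    have h6 : QuotientGroup.mk' K (g * h * g⁻¹ * h⁻¹) = 1 := by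
      have : (QuotientGroup.mk' K h : X ⧸ K) = QuotientGroup.mk' K g * QuotientGroup.mk' K h
          * (QuotientGroup.mk' K g)⁻¹ := h5
      rw [map_mul, map_mul, map_mul, map_inv, map_inv, ← this]
      simp
    rwa [← MonoidHom.mem_ker, QuotientGroup.ker_mk'] at h6
  intro h hh g
  have h7 : h * g * h⁻¹ * g⁻¹ = (g * h * g⁻¹ * h⁻¹)⁻¹ := by group
  rw [h7]
  exact inv_mem (key g h hh)

/-- The auxiliary property: every chief factor of order divisible by `p` has order `p`
and is central. -/
def PCC (p : ℕ) (X : Type*) [Group X] : Prop :=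
  ∀ K H : Subgroup X, IsChiefFactor K H → p ∣ (K.subgroupOf H).index →
    (K.subgroupOf H).index = p ∧ ∀ h ∈ H, ∀ g : X, h * g * h⁻¹ * g⁻¹ ∈ K

lemma PCC_quotient [Group X] [Finite X] {p : ℕ} (hC : PCC p X)
    (N : Subgroup X) [N.Normal] : PCC p (X ⧸ N) := by
  intro K' H' hcf hdvd
  obtain ⟨hK', hH', hlt', hmax'⟩ := hcf
  set π := QuotientGroup.mk' N with hπ
  have hsurj : Function.Surjective π := QuotientGroup.mk'_surjective N
  have hkerπ : π.ker = N := QuotientGroup.ker_mk' N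
  set K := K'.comap π with hKdef
  set H := H'.comap π with hHdef
  have hrel : (K.subgroupOf H).index = (K'.subgroupOf H').index := by
    have e1 : K.relIndex H * H.index = K.index :=
      Subgroup.relIndex_mul_index (Subgroup.comap_mono hlt'.le)
    have e2 : K'.relIndex H' * H'.index = K'.index :=
      Subgroup.relIndex_mul_index hlt'.le
    have e3 : H.index = H'.index := Subgroup.index_comap_of_surjective _ hsurj
    have e4 : K.index = K'.index := Subgroup.index_comap_of_surjective _ hsurj
    have h0 : 0 < H'.index := Nat.pos_of_ne_zero Subgroup.index_ne_zero_of_finite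
    have e5 : K.relIndex H * H'.index = K'.relIndex H' * H'.index := by
      rw [e2, ← e4, ← e1, e3]
    exact Nat.eq_of_mul_eq_mul_right h0 e5
  have hKN : N ≤ K := by
    intro x hx
    have hx1 : π x = 1 := by rw [← hkerπ] at hx; exact hx
    rw [hKdef, Subgroup.mem_comap, hx1]
    exact one_mem _
  have hcfX : IsChiefFactor K H := by
    refine ⟨hK'.comap π, hH'.comap π, ?_, ?_⟩
    · refine lt_of_le_of_ne (Subgroup.comap_mono hlt'.le) fun h => ?_
      exact hlt'.ne (Subgroup.comap_injective hsurj h)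
    · intro M hM hKM hMH
      have hNM : π.ker ≤ M := by rw [hkerπ]; exact le_trans hKN hKM.le
      have h1 : K' < M.map π := by
        refine lt_of_le_of_ne ?_ fun h => ?_
        · rw [← Subgroup.map_comap_eq_self_of_surjective hsurj K']
          exact Subgroup.map_mono hKM.le
        · exact hKM.ne (by rw [hKdef, h, Subgroup.comap_map_eq_self hNM])
      have h2 : M.map π ≤ H' := by
        rw [← Subgroup.map_comap_eq_self_of_surjective hsurj H']
        exact Subgroup.map_mono hMH
      have h3 : M.map π = H' := hmax' _ (hM.map π hsurj) h1 h2
      rw [← Subgroup.comap_map_eq_self hNM, h3]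
  obtain ⟨hidx, hcent⟩ := hC K H hcfX (by rwa [hrel])
  refine ⟨by rw [← hrel]; exact hidx, ?_⟩
  intro h' hh' g'
  obtain ⟨h, rfl⟩ := hsurj h'
  obtain ⟨g, rfl⟩ := hsurj g'
  have hh : h ∈ H := by rw [hHdef, Subgroup.mem_comap]; exact hh'
  have := hcent h hh g
  rw [hKdef, Subgroup.mem_comap] at this
  simpa using this

universe u

lemma pnilp_aux {p : ℕ} (hp : p.Prime) :
    ∀ n : ℕ, ∀ (X : Type u) (_ : Group X) (_ : Finite X), Nat.card X = n → PCC p X →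
      ∃ W : Subgroup X, W.Normal ∧ ¬ p ∣ Nat.card W ∧ ∃ k : ℕ, W.index = p ^ k := by
  intro n
  induction n using Nat.strong_induction_on with
  | _ n IH =>
  intro X _ _ hcard hC
  rcases eq_or_ne (Nat.card X) 1 with h1 | h1
  · refine ⟨⊥, inferInstance, ?_, 0, ?_⟩
    · rw [Subgroup.card_bot, Nat.dvd_one]
      exact hp.ne_one
    · rw [Subgroup.index_bot, h1, pow_zero]
  · -- X is nontrivial; pick a minimal normal subgroup N
    haveI : Finite (Subgroup X) :=
      Finite.of_injective (fun H : Subgroup X => (H : Set X)) SetLike.coe_injective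
    set S : Set (Subgroup X) := {M : Subgroup X | M.Normal ∧ M ≠ ⊥} with hS
    have hne : S.Nonempty := by
      refine ⟨⊤, inferInstance, fun h => h1 ?_⟩
      rw [← Subgroup.card_top (G := X), h, Subgroup.card_bot]
    obtain ⟨N, ⟨hNnorm, hNbot⟩, hNmin⟩ :=
      Set.Finite.exists_minimalFor (fun M : Subgroup X => Nat.card M) S (Set.toFinite S) hne
    haveI := hNnorm
    have hchief : IsChiefFactor (⊥ : Subgroup X) N := by
      refine ⟨inferInstance, hNnorm, bot_lt_iff_ne_bot.mpr hNbot, ?_⟩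
      intro M hM hbotM hMN
      have hMS : M ∈ S := ⟨hM, by rintro rfl; exact lt_irrefl _ hbotM⟩
      have hle : Nat.card M ≤ Nat.card N :=
        Nat.le_of_dvd Nat.card_pos (Subgroup.card_dvd_of_le hMN)
      exact Subgroup.eq_of_le_of_card_ge hMN (hNmin hMS hle)
    set π := QuotientGroup.mk' N with hπ
    have hsurj : Function.Surjective π := QuotientGroup.mk'_surjective N
    have hkerπ : π.ker = N := QuotientGroup.ker_mk' N
    have hNgt : 1 < Nat.card N := (Subgroup.one_lt_card_iff_ne_bot N).mpr hNbot
    have hqlt : Nat.card (X ⧸ N) < n := by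
      rw [← hcard, Subgroup.card_eq_card_quotient_mul_card_subgroup N]
      have h2 : 0 < Nat.card (X ⧸ N) := Nat.card_pos
      calc Nat.card (X ⧸ N) = Nat.card (X ⧸ N) * 1 := (mul_one _).symm
        _ < Nat.card (X ⧸ N) * Nat.card N := (mul_lt_mul_iff_right₀ h2).mpr hNgt
    obtain ⟨W', hW'n, hW'p, k, hW'idx⟩ :=
      IH _ hqlt (X ⧸ N) inferInstance inferInstance rfl (PCC_quotient hC N)
    by_cases hpN : p ∣ Nat.card N
    · -- the minimal normal subgroup is central of order p
      have hrelbot : ((⊥ : Subgroup X).subgroupOf N).index = Nat.card N := by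
        rw [Subgroup.bot_subgroupOf, Subgroup.index_bot]
      obtain ⟨hNp, hNcent⟩ := hC ⊥ N hchief (by rwa [hrelbot])
      have hcardN : Nat.card N = p := by rwa [hrelbot] at hNp
      have hNcomm : ∀ x ∈ N, ∀ g : X, x * g = g * x := by
        intro x hx g
        have h2 := hNcent x hx g
        rw [Subgroup.mem_bot, mul_inv_eq_one] at h2
        conv_rhs => rw [← h2]
        group
      set M := W'.comap π with hMdef
      have hNM : N ≤ M := by
        intro x hx
        have hx1 : π x = 1 := by rw [← hkerπ] at hx; exact hx
        rw [hMdef, Subgroup.mem_comap, hx1]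
        exact one_mem _
      haveI hMnorm : M.Normal := hW'n.comap π
      have hMidx : M.index = p ^ k := by
        rw [hMdef, Subgroup.index_comap_of_surjective _ hsurj, hW'idx]
      set N' := N.subgroupOf M with hN'def
      haveI : N'.Normal := hNnorm.subgroupOf M
      have hcardN' : Nat.card N' = p := by
        rw [hN'def, Nat.card_congr (Subgroup.subgroupOfEquivOfLe hNM).toEquiv]
        exact hcardN
      have hidxN' : N'.index = Nat.card W' := by
        have hker : (π.comp M.subtype).ker = N' := by
          rw [← MonoidHom.comap_ker, hkerπ]; rfl
        have hrange : (π.comp M.subtype).range = W' := by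
          rw [MonoidHom.range_comp, Subgroup.range_subtype, hMdef,
            Subgroup.map_comap_eq_self_of_surjective hsurj]
        calc N'.index = Nat.card (↥M ⧸ N') := rfl
          _ = Nat.card (↥M ⧸ (π.comp M.subtype).ker) := by rw [hker]
          _ = Nat.card (π.comp M.subtype).range :=
              Nat.card_congr (QuotientGroup.quotientKerEquivRange _).toEquiv
          _ = Nat.card W' := by rw [hrange]
      have hcop : Nat.Coprime (Nat.card N') N'.index := by
        rw [hcardN', hidxN']
        exact (hp.coprime_iff_not_dvd).mpr hW'p
      obtain ⟨Hc, hHc⟩ := Subgroup.exists_right_complement'_of_coprime hcop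
      have hcardHc : Nat.card Hc = Nat.card W' := by
        have e1 : Nat.card N' * Nat.card Hc = Nat.card M := hHc.card_mul
        have e2 : N'.index * Nat.card N' = Nat.card M := Subgroup.index_mul_card N'
        have e3 : Nat.card N' * Nat.card Hc = Nat.card N' * N'.index := by
          rw [e1, ← e2, mul_comm]
        rw [← hidxN']
        exact Nat.eq_of_mul_eq_mul_left (by rw [hcardN']; exact hp.pos) e3
      have hcardM : Nat.card M = p * Nat.card W' := by
        rw [← hHc.card_mul, hcardN', hcardHc]
      have hW'pos : 0 < Nat.card W' := Nat.card_pos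
      have hmem : ∀ x : X, x ∈ Hc.map M.subtype ↔ x ∈ M ∧ ¬ p ∣ orderOf x := by
        intro x
        constructor
        · rintro ⟨h, hh, rfl⟩
          refine ⟨h.2, fun hdvd => hW'p ?_⟩
          have h2 : orderOf (M.subtype h) ∣ Nat.card Hc := by
            have := Subgroup.orderOf_dvd_natCard Hc hh
            rwa [← Subgroup.orderOf_coe h] at this
          rw [← hcardHc]
          exact dvd_trans hdvd h2
        · rintro ⟨hxM, hxord⟩
          set m : ↥M := ⟨x, hxM⟩ with hm
          have hordm : ¬ p ∣ orderOf m := by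
            rw [hm, Subgroup.orderOf_mk]
            exact hxord
          obtain ⟨⟨n₁, hh₁⟩, hprod, -⟩ := hHc.existsUnique m
          have hn₁N : ((n₁ : ↥M) : X) ∈ N := n₁.2
          have hcomm : Commute (n₁ : ↥M) (hh₁ : ↥M) := by
            apply Subtype.ext
            exact hNcomm _ hn₁N _
          have hmdvd : orderOf m ∣ Nat.card W' := by
            have h5 : orderOf m ∣ Nat.card M := orderOf_dvd_natCard m
            rw [hcardM] at h5
            exact Nat.Coprime.dvd_of_dvd_mul_left
              (((hp.coprime_iff_not_dvd).mpr hordm).symm) h5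
          have hh1pow : ((hh₁ : ↥M)) ^ Nat.card W' = 1 := by
            rw [← orderOf_dvd_iff_pow_eq_one, ← hcardHc]
            exact Subgroup.orderOf_dvd_natCard Hc hh₁.2
          have hmpow : m ^ Nat.card W' = 1 :=
            orderOf_dvd_iff_pow_eq_one.mp hmdvd
          have hn1pow : ((n₁ : ↥M)) ^ Nat.card W' = 1 := by
            have h6 : ((n₁ : ↥M) * (hh₁ : ↥M)) ^ Nat.card W'
                = ((n₁ : ↥M)) ^ Nat.card W' * ((hh₁ : ↥M)) ^ Nat.card W' :=
              hcomm.mul_pow _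
            rw [hprod, hmpow, hh1pow, mul_one] at h6
            exact h6.symm
          have hn1one : (n₁ : ↥M) = 1 := by
            rw [← orderOf_eq_one_iff]
            have h7 : orderOf (n₁ : ↥M) ∣ p := by
              have := Subgroup.orderOf_dvd_natCard N' n₁.2
              rwa [hcardN'] at this
            have h8 : orderOf (n₁ : ↥M) ∣ Nat.card W' :=
              orderOf_dvd_iff_pow_eq_one.mpr hn1pow
            have h9 := Nat.dvd_gcd h7 h8
            rwa [Nat.Coprime.gcd_eq_one ((hp.coprime_iff_not_dvd).mpr hW'p),
              Nat.dvd_one] at h9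
          have hmh : m = (hh₁ : ↥M) := by rw [← hprod, hn1one, one_mul]
          exact ⟨(hh₁ : ↥M), hh₁.2, by rw [← hmh]; rfl⟩
      refine ⟨Hc.map M.subtype, ?_, ?_, k + 1, ?_⟩
      · constructor
        intro w hw g
        rw [hmem] at hw ⊢
        refine ⟨hMnorm.conj_mem w hw.1 g, ?_⟩
        have : g * w * g⁻¹ = (MulAut.conj g) w := by rw [MulAut.conj_apply]
        rw [this, (MulAut.conj g).orderOf_eq w]
        exact hw.2
      · have : Nat.card (Hc.map M.subtype) = Nat.card Hc :=
          (Nat.card_congr (Subgroup.equivMapOfInjective Hc M.subtype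
            M.subtype_injective).toEquiv).symm
        rw [this, hcardHc]
        exact hW'p
      · have hWM : Hc.map M.subtype ≤ M := Subgroup.map_subtype_le Hc
        have hsub : (Hc.map M.subtype).subgroupOf M = Hc := by
          apply Subgroup.comap_map_eq_self
          rw [Subgroup.ker_subtype]
          exact bot_le
        have hrelW : (Hc.map M.subtype).relIndex M = p := by
          have e1 : Hc.index * Nat.card Hc = Nat.card M := Subgroup.index_mul_card Hc
          rw [hcardHc, hcardM] at e1
          have e2 : Hc.index = p := Nat.eq_of_mul_eq_mul_right hW'pos e1
          show ((Hc.map M.subtype).subgroupOf M).index = p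
          rw [hsub, e2]
        have e3 := Subgroup.relIndex_mul_index hWM
        rw [hrelW, hMidx] at e3
        rw [← e3, pow_succ, mul_comm]
    · -- p' minimal normal subgroup : just pull back
      refine ⟨W'.comap π, hW'n.comap π, ?_, k, ?_⟩
      · intro hdvd
        haveI := Fact.mk hp
        obtain ⟨x, hx⟩ := exists_prime_orderOf_dvd_card' p hdvd
        have hox : orderOf ((x : ↥(W'.comap π)) : X) = p := by
          rw [Subgroup.orderOf_coe]; exact hx
        have h2 : orderOf (π (x : X)) ∣ p := by
          rw [← hox]; exact orderOf_map_dvd π _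
        rcases (Nat.dvd_prime hp).mp h2 with h3 | h3
        · have h4 : π (x : X) = 1 := orderOf_eq_one_iff.mp h3
          have h5 : (x : X) ∈ N := by
            have h5' : (x : X) ∈ π.ker := MonoidHom.mem_ker.mpr h4
            rwa [hkerπ] at h5'
          have h6 := Subgroup.orderOf_dvd_natCard N h5
          rw [hox] at h6
          exact hpN h6
        · have h4 : π (x : X) ∈ W' := x.2
          have h5 := Subgroup.orderOf_dvd_natCard W' h4
          rw [h3] at h5
          exact hW'p h5
      · rw [Subgroup.index_comap_of_surjective _ hsurj, hW'idx]

lemma chain_aux [Group G] [Finite G] {p : ℕ} (hp : p.Prime) {O E : Subgroup G}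
    (hO : O.Normal) (hOE : O ≤ E) {m : ℕ} (hidx : (O.subgroupOf E).index = p ^ m)
    (hcent : ∀ K H : Subgroup G, IsChiefFactor K H → p ∣ (K.subgroupOf H).index →
      ∀ h ∈ H, ∀ g : G, h * g * h⁻¹ * g⁻¹ ∈ K) :
    ∀ n : ℕ, ∀ T : Subgroup G, Nat.card T = n → T.Normal → O ≤ T → T ≤ E →
      ∃ k : ℕ, ∃ Z : ℕ → Subgroup G, Z 0 = O ∧ Z k = T ∧
        ∀ i < k, Z i ≤ Z (i + 1) ∧ ∀ z ∈ Z (i + 1), ∀ g : G, z * g * z⁻¹ * g⁻¹ ∈ Z i := by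
  intro n
  induction n using Nat.strong_induction_on with
  | _ n IH =>
  intro T hcardT hTnorm hOT hTE
  by_cases hTO : T ≤ O
  · exact ⟨0, fun _ => O, rfl, le_antisymm hOT hTO, fun i hi => absurd hi (Nat.not_lt_zero i)⟩
  · have hOltT : O < T := lt_of_le_of_ne hOT (fun h => hTO (le_of_eq h.symm))
    haveI : Finite (Subgroup G) :=
      Finite.of_injective (fun H : Subgroup G => (H : Set G)) SetLike.coe_injective
    set S : Set (Subgroup G) := {M : Subgroup G | M.Normal ∧ O ≤ M ∧ M < T} with hS
    have hne : S.Nonempty := ⟨O, hO, le_refl O, hOltT⟩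
    obtain ⟨K, ⟨hKnorm, hOK, hKT⟩, hKmax⟩ :=
      Set.Finite.exists_maximalFor (fun M : Subgroup G => Nat.card M) S (Set.toFinite S) hne
    have hchief : IsChiefFactor K T := by
      refine ⟨hKnorm, hTnorm, hKT, ?_⟩
      intro M hM hKM hMT
      by_contra hMTne
      have hMS : M ∈ S := ⟨hM, le_trans hOK hKM.le, lt_of_le_of_ne hMT hMTne⟩
      have hle : Nat.card K ≤ Nat.card M :=
        Nat.le_of_dvd Nat.card_pos (Subgroup.card_dvd_of_le hKM.le)
      have heq : Nat.card K = Nat.card M := le_antisymm hle (hKmax hMS hle)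
      exact hKM.ne (Subgroup.eq_of_le_of_card_ge hKM.le (le_of_eq heq.symm))
    have hdvd : p ∣ (K.subgroupOf T).index := by
      have e1 : O.relIndex K * K.relIndex T = O.relIndex T :=
        Subgroup.relIndex_mul_relIndex O K T hOK hKT.le
      have e2 : O.relIndex T * T.relIndex E = O.relIndex E :=
        Subgroup.relIndex_mul_relIndex O T E hOT hTE
      have e3 : K.relIndex T ∣ p ^ m := by
        rw [show (p : ℕ) ^ m = O.relIndex E from hidx.symm, ← e2, ← e1]
        exact Dvd.dvd.mul_right (Dvd.intro_left _ rfl) _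
      obtain ⟨j, hj, hjeq⟩ := (Nat.dvd_prime_pow hp).mp e3
      have hjne : j ≠ 0 := by
        intro h0
        rw [h0, pow_zero] at hjeq
        have := Subgroup.relIndex_eq_one.mp hjeq
        exact hKT.not_ge this
      rw [show (K.subgroupOf T).index = K.relIndex T from rfl, hjeq]
      exact dvd_pow_self p hjne
    have hcentKT := hcent K T hchief hdvd
    have hcardK : Nat.card K < n := by
      rw [← hcardT]
      have hle : Nat.card K ≤ Nat.card T :=
        Nat.le_of_dvd Nat.card_pos (Subgroup.card_dvd_of_le hKT.le)
      rcases lt_or_eq_of_le hle with h | h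
      · exact h
      · exact absurd (Subgroup.eq_of_le_of_card_ge hKT.le (le_of_eq h.symm)) hKT.ne
    obtain ⟨k, Z, hZ0, hZk, hZchain⟩ :=
      IH _ hcardK K rfl hKnorm hOK (le_trans hKT.le hTE)
    refine ⟨k + 1, fun i => if i ≤ k then Z i else T, ?_, ?_, ?_⟩
    · simp [hZ0]
    · simp
    · intro i hi
      rcases lt_or_eq_of_le (Nat.lt_succ_iff.mp hi) with hik | hik
      · have h1 : i ≤ k := le_of_lt hik
        have h2 : i + 1 ≤ k := hik
        simp only [if_pos h1, if_pos h2]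
        exact hZchain i hik
      · have h1 : i ≤ k := le_of_eq hik
        have h2 : ¬ (i + 1 ≤ k) := by omega
        dsimp only
        rw [if_pos h1, if_neg h2, hik, hZk]
        exact ⟨hKT.le, fun z hz g => hcentKT z hz g⟩

end Aux

/-- `E ⊴ G`, `P` a Sylow `p`-subgroup of `E`, `gcd(p-1,|G|) = 1` and `G`
`p`-supersoluble imply `E` is `p`-nilpotent and `E/O_{p'}(E) ≤ Z_∞(G/O_{p'}(E))`. -/
theorem stmt6 [Group G] [Finite G] (p : ℕ) (hp : p.Prime) (E P : Subgroup G)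
    (hE : E.Normal) (hPE : P ≤ E) (hPp : IsPGroup p P)
    (hSyl : ¬ p ∣ (P.subgroupOf E).index)
    (hco : Nat.Coprime (p - 1) (Nat.card G))
    (hsup : pSupersoluble p G) :
    pNilpotent p E ∧ LeHypercenterOver (OpPrime p E) E := by
  haveI := hE
  -- Step 1: the chief factor property
  have hC : PCC p G := by
    intro K H hcf hdvd
    have h1 : (K.subgroupOf H).index = p := hsup.2 K H hcf hdvd
    exact ⟨h1, central_of_index_p hp hco hcf.1 hcf.2.1 h1⟩
  -- Step 2: G has a normal p-complement W
  obtain ⟨W, hWn, hWp', k, hWidx⟩ :=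
    pnilp_aux hp (Nat.card G) G inferInstance inferInstance rfl hC
  haveI := hWn
  -- Step 3: O := W ⊓ E is the p'-core of E
  set O : Subgroup G := W ⊓ E with hOdef
  have hOn : O.Normal := by
    constructor
    intro x hx g
    rw [hOdef, Subgroup.mem_inf] at hx ⊢
    exact ⟨hWn.conj_mem x hx.1 g, hE.conj_mem x hx.2 g⟩
  have hOE : O ≤ E := inf_le_right
  have hOp' : ¬ p ∣ Nat.card O := fun h =>
    hWp' (dvd_trans h (Subgroup.card_dvd_of_le inf_le_left))
  obtain ⟨m, hm, hOidx⟩ : ∃ m ≤ k, (O.subgroupOf E).index = p ^ m := by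
    have h1 : (O.subgroupOf E).index = W.relIndex E := by
      rw [hOdef, Subgroup.inf_subgroupOf_right]; rfl
    have h2 : W.relIndex E ∣ p ^ k := by
      rw [← hWidx]; exact Subgroup.relIndex_dvd_index_of_normal W E
    obtain ⟨j, hj, hjeq⟩ := (Nat.dvd_prime_pow hp).mp h2
    exact ⟨j, hj, by rw [h1, hjeq]⟩
  -- Step 4: every element of E of p'-order lies in W
  have hkey : ∀ N : Subgroup G, ¬ p ∣ Nat.card N → N ≤ W := by
    intro N hN x hx
    set π := QuotientGroup.mk' W with hπ
    have hkerπ : π.ker = W := QuotientGroup.ker_mk' W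
    have h1 : orderOf (π x) ∣ orderOf x := orderOf_map_dvd π x
    have h2 : orderOf (π x) ∣ p ^ k := by
      have h3 : orderOf (π x) ∣ Nat.card (G ⧸ W) := orderOf_dvd_natCard (π x)
      have h4 : Nat.card (G ⧸ W) = W.index := rfl
      rwa [h4, hWidx] at h3
    have h5 : ¬ p ∣ orderOf x := fun h =>
      hN (dvd_trans h (Subgroup.orderOf_dvd_natCard N hx))
    have h6 : orderOf (π x) = 1 := by
      obtain ⟨j, hj, hjeq⟩ := (Nat.dvd_prime_pow hp).mp h2
      rcases Nat.eq_zero_or_pos j with h0 | h0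
      · rw [hjeq, h0, pow_zero]
      · exfalso
        apply h5
        calc (p : ℕ) ∣ p ^ j := dvd_pow_self p h0.ne'
          _ = orderOf (π x) := hjeq.symm
          _ ∣ orderOf x := h1
    have h7 : π x = 1 := orderOf_eq_one_iff.mp h6
    rw [← hkerπ]
    exact h7
  -- Step 5: OpPrime p E = O
  have hOeq : OpPrime p E = O := by
    apply le_antisymm
    · rw [OpPrime]
      refine iSup₂_le ?_
      rintro N ⟨hNE, -, hNp⟩
      exact le_inf (hkey N hNp) hNE
    · rw [OpPrime]
      exact le_iSup₂_of_le O ⟨hOE, hOn.subgroupOf E, hOp'⟩ (le_refl O)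
  constructor
  · -- p-nilpotency of E
    refine ⟨O.subgroupOf E, hOn.subgroupOf E, ?_, ?_⟩
    · have h1 : Nat.card (O.subgroupOf E) = Nat.card O :=
        Nat.card_congr (Subgroup.subgroupOfEquivOfLe hOE).toEquiv
      rw [h1]
      exact hOp'
    · intro q hq hdvd
      rw [hOidx] at hdvd
      exact (Nat.prime_dvd_prime_iff_eq hq hp).mp (hq.dvd_of_dvd_pow hdvd)
  · -- E/O lies in the hypercenter of G/O
    rw [hOeq]
    obtain ⟨n, Z, hZ0, hZn, hZchain⟩ :=
      chain_aux hp hOn hOE hOidx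
        (fun K H hcf hdvd => (hC K H hcf hdvd).2)
        (Nat.card E) E rfl hE hOE (le_refl E)
    exact ⟨n, Z, hZ0, le_of_eq hZn.symm, hZchain⟩
end

section
/- Let H, K, and N be pairwise permutable subgroups of a finite group G with H a Hall subgroup of G. Then N ∩ (HK) = (N ∩ H)(N ∩ K). -/
open Subgroup Pointwise

variable {G : Type*}

theorem prod_card [Group G] [Finite G] (A B : Subgroup G) :
    Nat.card (↑A * ↑B : Set G) * Nat.card (A ⊓ B : Subgroup G) =
      Nat.card A * Nat.card B := by
  letI : SMul (A × B) G := ⟨fun p g => (p.1 : G) * g * (p.2 : G)⁻¹⟩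
  letI : MulAction (A × B) G :=
    { one_smul := fun g => by
        show ((1 : A) : G) * g * ((1 : B) : G)⁻¹ = g
        simp
      mul_smul := fun p q g => by
        show ((p.1 * q.1 : A) : G) * g * ((p.2 * q.2 : B) : G)⁻¹ =
          (p.1 : G) * ((q.1 : G) * g * (q.2 : G)⁻¹) * (p.2 : G)⁻¹
        push_cast
        simp [mul_assoc] }
  have horb : MulAction.orbit (A × B) (1 : G) = (↑A * ↑B : Set G) := by
    ext g
    constructor
    · rintro ⟨p, rfl⟩
      refine ⟨p.1, p.1.2, (p.2 : G)⁻¹, inv_mem p.2.2, ?_⟩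
      show (p.1 : G) * (p.2 : G)⁻¹ = (p.1 : G) * 1 * (p.2 : G)⁻¹
      rw [mul_one]
    · rintro ⟨a, ha, b, hb, rfl⟩
      refine ⟨(⟨a, ha⟩, ⟨b⁻¹, inv_mem hb⟩), ?_⟩
      show a * 1 * b⁻¹⁻¹ = a * b
      rw [mul_one, inv_inv]
  have hstab : Nat.card (MulAction.stabilizer (A × B) (1 : G)) =
      Nat.card (A ⊓ B : Subgroup G) := by
    refine Nat.card_congr (Equiv.symm ?_)
    refine ⟨fun x => ⟨(⟨x, x.2.1⟩, ⟨x, x.2.2⟩), ?_⟩,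
      fun p => ⟨p.1.1.1, p.1.1.2, ?_⟩, fun x => rfl, fun p => ?_⟩
    · show (x : G) * 1 * (x : G)⁻¹ = 1
      simp
    · have hp : ((p.1.1 : G) : G) * 1 * ((p.1.2 : G) : G)⁻¹ = 1 := p.2
      rw [mul_one] at hp
      have : ((p.1.1 : G) : G) = (p.1.2 : G) := eq_of_mul_inv_eq_one hp
      rw [this]; exact p.1.2.2
    · apply Subtype.ext
      apply Prod.ext
      · rfl
      · apply Subtype.ext
        have hp : ((p.1.1 : G) : G) * 1 * ((p.1.2 : G) : G)⁻¹ = 1 := p.2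
        rw [mul_one] at hp
        exact eq_of_mul_inv_eq_one hp
  have key := Nat.card_congr (MulAction.orbitProdStabilizerEquivGroup (A × B) (1 : G))
  rw [Nat.card_prod, Nat.card_prod] at key
  rw [← hstab, ← horb]
  exact key

/-- The product of two permutable subgroups, as a subgroup. -/
def pmul [Group G] (A B : Subgroup G) (h : permutes A B) : Subgroup G where
  carrier := ↑A * ↑B
  one_mem' := ⟨1, one_mem A, 1, one_mem B, one_mul 1⟩
  mul_mem' := by
    rintro x y ⟨a1, ha1, b1, hb1, rfl⟩ ⟨a2, ha2, b2, hb2, rfl⟩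
    have hmem : b1 * a2 ∈ (↑A * ↑B : Set G) := by
      rw [h]; exact ⟨b1, hb1, a2, ha2, rfl⟩
    obtain ⟨a3, ha3, b3, hb3, he⟩ := hmem
    simp only at he ⊢
    refine ⟨a1 * a3, mul_mem ha1 ha3, b3 * b2, mul_mem hb3 hb2, ?_⟩
    show a1 * a3 * (b3 * b2) = a1 * b1 * (a2 * b2)
    have h1 : a1 * a3 * (b3 * b2) = a1 * (a3 * b3) * b2 := by group
    rw [h1, he]; group
  inv_mem' := by
    rintro x ⟨a, ha, b, hb, rfl⟩
    have hmem : b⁻¹ * a⁻¹ ∈ (↑B * ↑A : Set G) :=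
      ⟨b⁻¹, inv_mem hb, a⁻¹, inv_mem ha, rfl⟩
    rw [← h] at hmem
    simpa [mul_inv_rev] using hmem

theorem pmul_coe [Group G] (A B : Subgroup G) (h : permutes A B) :
    (↑(pmul A B h) : Set G) = ↑A * ↑B := rfl


/-- If `H`, `K`, `N` are pairwise permutable and `H` is a Hall subgroup,
then `N ∩ HK = (N ∩ H)(N ∩ K)`. -/
theorem stmt8 [Group G] [Finite G] (H K N : Subgroup G)
    (hHK : permutes H K) (hHN : permutes H N) (hKN : permutes K N)
    (hHall : Nat.Coprime (Nat.card H) H.index) :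
    (N : Set G) ∩ ((H : Set G) * (K : Set G)) =
      ((N ⊓ H : Subgroup G) : Set G) * ((N ⊓ K : Subgroup G) : Set G) := by
  classical
  set HK : Subgroup G := pmul H K hHK with hHKdef
  set D : Subgroup G := N ⊓ HK with hDdef
  have hHKmem : ∀ {x : G}, x ∈ ((H : Set G) * (K : Set G)) ↔ x ∈ HK := Iff.rfl
  have hHle : H ≤ HK := fun x hx => hHKmem.mp ⟨x, hx, 1, one_mem K, mul_one x⟩
  have hKle : K ≤ HK := fun x hx => hHKmem.mp ⟨1, one_mem H, x, hx, one_mul x⟩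
  have hDset : (↑D : Set G) = (N : Set G) ∩ ((H : Set G) * (K : Set G)) := by
    rw [hDdef, Subgroup.coe_inf]; rfl
  have hDmem : ∀ {x : G}, x ∈ D ↔ x ∈ N ∧ x ∈ HK := fun {x} => Subgroup.mem_inf
  -- H permutes with D
  have e1 : (H : Set G) * (D : Set G) = ((H : Set G) * (N : Set G)) ∩ ((H : Set G) * (K : Set G)) := by
    ext g; constructor
    · rintro ⟨a, ha, x, hx, rfl⟩
      have hx' : x ∈ D := hx
      exact ⟨⟨a, ha, x, (hDmem.mp hx').1, rfl⟩,
        hHKmem.mpr (mul_mem (hHle ha) (hDmem.mp hx').2)⟩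
    · rintro ⟨⟨a, ha, n, hn, rfl⟩, hmem2⟩
      have hn2 : n ∈ HK := by
        have := mul_mem (inv_mem (hHle ha)) (hHKmem.mp hmem2)
        simpa using this
      exact ⟨a, ha, n, hDmem.mpr ⟨hn, hn2⟩, rfl⟩
  have e2 : (D : Set G) * (H : Set G) = ((N : Set G) * (H : Set G)) ∩ ((H : Set G) * (K : Set G)) := by
    ext g; constructor
    · rintro ⟨x, hx, a, ha, rfl⟩
      have hx' : x ∈ D := hx
      exact ⟨⟨x, (hDmem.mp hx').1, a, ha, rfl⟩,
        hHKmem.mpr (mul_mem (hDmem.mp hx').2 (hHle ha))⟩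
    · rintro ⟨⟨n, hn, a, ha, rfl⟩, hmem2⟩
      have hn2 : n ∈ HK := by
        have := mul_mem (hHKmem.mp hmem2) (inv_mem (hHle ha))
        simpa using this
      exact ⟨n, hDmem.mpr ⟨hn, hn2⟩, a, ha, rfl⟩
  have hpHD : permutes H D := by
    show (H : Set G) * (D : Set G) = (D : Set G) * (H : Set G)
    rw [e1, e2, hHN]
  -- K permutes with D
  have e3 : (K : Set G) * (D : Set G) = ((K : Set G) * (N : Set G)) ∩ ((H : Set G) * (K : Set G)) := by
    ext g; constructor
    · rintro ⟨a, ha, x, hx, rfl⟩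
      have hx' : x ∈ D := hx
      exact ⟨⟨a, ha, x, (hDmem.mp hx').1, rfl⟩,
        hHKmem.mpr (mul_mem (hKle ha) (hDmem.mp hx').2)⟩
    · rintro ⟨⟨a, ha, n, hn, rfl⟩, hmem2⟩
      have hn2 : n ∈ HK := by
        have := mul_mem (inv_mem (hKle ha)) (hHKmem.mp hmem2)
        simpa using this
      exact ⟨a, ha, n, hDmem.mpr ⟨hn, hn2⟩, rfl⟩
  have e4 : (D : Set G) * (K : Set G) = ((N : Set G) * (K : Set G)) ∩ ((H : Set G) * (K : Set G)) := by
    ext g; constructor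
    · rintro ⟨x, hx, a, ha, rfl⟩
      have hx' : x ∈ D := hx
      exact ⟨⟨x, (hDmem.mp hx').1, a, ha, rfl⟩,
        hHKmem.mpr (mul_mem (hDmem.mp hx').2 (hKle ha))⟩
    · rintro ⟨⟨n, hn, a, ha, rfl⟩, hmem2⟩
      have hn2 : n ∈ HK := by
        have := mul_mem (hHKmem.mp hmem2) (inv_mem (hKle ha))
        simpa using this
      exact ⟨n, hDmem.mpr ⟨hn, hn2⟩, a, ha, rfl⟩
  have hpKD : permutes K D := by
    show (K : Set G) * (D : Set G) = (D : Set G) * (K : Set G)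
    rw [e3, e4, hKN]
  set HD : Subgroup G := pmul H D hpHD with hHDdef
  set KD : Subgroup G := pmul K D hpKD with hKDdef
  have hHleHD : H ≤ HD := fun x hx =>
    show x ∈ ((H : Set G) * (D : Set G)) from ⟨x, hx, 1, SetLike.mem_coe.mpr (one_mem D), mul_one x⟩
  have hKleKD : K ≤ KD := fun x hx =>
    show x ∈ ((K : Set G) * (D : Set G)) from ⟨x, hx, 1, SetLike.mem_coe.mpr (one_mem D), mul_one x⟩
  have hKDleHK : KD ≤ HK := by
    intro x hx
    obtain ⟨k, hk, y, hy, rfl⟩ := show x ∈ ((K : Set G) * (D : Set G)) from hx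
    exact mul_mem (hKle hk) ((inf_le_right : D ≤ HK) (SetLike.mem_coe.mp hy))
  -- cardinality bookkeeping
  have hpos : ∀ X : Subgroup G, 0 < Nat.card X := fun X => Nat.card_pos
  have cHD : Nat.card ((H : Set G) * (D : Set G) : Set G) = Nat.card HD :=
    Nat.card_congr (Equiv.subtypeEquivRight fun x => Iff.rfl)
  have cKD : Nat.card ((K : Set G) * (D : Set G) : Set G) = Nat.card KD :=
    Nat.card_congr (Equiv.subtypeEquivRight fun x => Iff.rfl)
  have cHK : Nat.card ((H : Set G) * (K : Set G) : Set G) = Nat.card HK :=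
    Nat.card_congr (Equiv.subtypeEquivRight fun x => Iff.rfl)
  have cD : Nat.card (↑D : Set G) = Nat.card D :=
    Nat.card_congr (Equiv.subtypeEquivRight fun x => Iff.rfl)
  have hHinfD : H ⊓ D = N ⊓ H := by
    rw [hDdef, ← inf_assoc, inf_of_le_left (le_trans inf_le_left hHle), inf_comm]
  have hKinfD : K ⊓ D = N ⊓ K := by
    rw [hDdef, ← inf_assoc, inf_of_le_left (le_trans inf_le_left hKle), inf_comm]
  obtain ⟨m₁, hm₁⟩ : Nat.card H ∣ Nat.card HD := Subgroup.card_dvd_of_le hHleHD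
  obtain ⟨m₂, hm₂⟩ : Nat.card K ∣ Nat.card KD := Subgroup.card_dvd_of_le hKleKD
  have hm₁idx : m₁ ∣ H.index := by
    have h2 : Nat.card HD ∣ Nat.card G := Subgroup.card_subgroup_dvd_card HD
    rw [hm₁, ← H.card_mul_index] at h2
    exact (Nat.mul_dvd_mul_iff_left (hpos H)).mp h2
  have pc1 := prod_card H D
  rw [cHD, hm₁, hHinfD] at pc1
  have hd_eq1 : Nat.card D = m₁ * Nat.card (N ⊓ H : Subgroup G) := by
    apply Nat.eq_of_mul_eq_mul_left (hpos H)
    rw [← pc1]; ring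
  have pc2 := prod_card K D
  rw [cKD, hm₂, hKinfD] at pc2
  have hd_eq2 : Nat.card D = m₂ * Nat.card (N ⊓ K : Subgroup G) := by
    apply Nat.eq_of_mul_eq_mul_left (hpos K)
    rw [← pc2]; ring
  have hm₂h : m₂ ∣ Nat.card H := by
    obtain ⟨t, ht⟩ : Nat.card KD ∣ Nat.card HK := Subgroup.card_dvd_of_le hKDleHK
    have pcHK := prod_card H K
    rw [cHK, ht, hm₂] at pcHK
    refine ⟨t * Nat.card (H ⊓ K : Subgroup G), ?_⟩
    apply Nat.eq_of_mul_eq_mul_left (hpos K)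
    rw [show Nat.card K * Nat.card H = Nat.card H * Nat.card K from mul_comm _ _, ← pcHK]
    ring
  obtain ⟨e, he⟩ : Nat.card ((N ⊓ H) ⊓ (N ⊓ K) : Subgroup G) ∣
      Nat.card (N ⊓ K : Subgroup G) := Subgroup.card_dvd_of_le inf_le_right
  have hcH : Nat.card ((N ⊓ H) ⊓ (N ⊓ K) : Subgroup G) ∣ Nat.card H :=
    Subgroup.card_dvd_of_le (le_trans inf_le_left inf_le_right)
  have hcop1 : Nat.Coprime m₁ (Nat.card H) :=
    Nat.Coprime.coprime_dvd_left hm₁idx hHall.symm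
  have hm₁b : m₁ ∣ Nat.card (N ⊓ K : Subgroup G) := by
    have hdvd : m₁ ∣ m₂ * Nat.card (N ⊓ K : Subgroup G) := by
      rw [← hd_eq2, hd_eq1]; exact Dvd.intro _ rfl
    exact (hcop1.coprime_dvd_right hm₂h).dvd_of_dvd_mul_left hdvd
  have hm₁e : m₁ ∣ e := by
    have h1 : m₁ ∣ Nat.card ((N ⊓ H) ⊓ (N ⊓ K) : Subgroup G) * e := he ▸ hm₁b
    exact (hcop1.coprime_dvd_right hcH).dvd_of_dvd_mul_left h1
  obtain ⟨f, hf⟩ := hm₁e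
  have pcP := prod_card (N ⊓ H) (N ⊓ K)
  have hPd : Nat.card (((N ⊓ H : Subgroup G) : Set G) * ((N ⊓ K : Subgroup G) : Set G) : Set G) =
      Nat.card D * f := by
    apply Nat.eq_of_mul_eq_mul_right (hpos ((N ⊓ H) ⊓ (N ⊓ K)))
    rw [pcP, he, hf, hd_eq1]; ring
  have hf1 : 1 ≤ f := by
    rcases Nat.eq_zero_or_pos f with h0 | h
    · exfalso
      have : Nat.card (N ⊓ K : Subgroup G) = 0 := by rw [he, hf, h0]; ring
      exact (hpos _).ne' this
    · exact h
  have hcard_ge : Nat.card (↑D : Set G) ≤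
      Nat.card (((N ⊓ H : Subgroup G) : Set G) * ((N ⊓ K : Subgroup G) : Set G) : Set G) := by
    rw [cD, hPd]
    exact Nat.le_mul_of_pos_right _ hf1
  have hsub : (((N ⊓ H : Subgroup G) : Set G) * ((N ⊓ K : Subgroup G) : Set G)) ⊆ (D : Set G) := by
    rintro x ⟨y, hy, z, hz, rfl⟩
    have hy' : y ∈ N ⊓ H := SetLike.mem_coe.mp hy
    have hz' : z ∈ N ⊓ K := SetLike.mem_coe.mp hz
    refine SetLike.mem_coe.mpr (hDmem.mpr ⟨mul_mem hy'.1 hz'.1, ?_⟩)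
    exact mul_mem (hHle hy'.2) (hKle hz'.2)
  have hset : (((N ⊓ H : Subgroup G) : Set G) * ((N ⊓ K : Subgroup G) : Set G)) = (D : Set G) := by
    apply Set.eq_of_subset_of_ncard_le hsub ?_ (Set.toFinite _)
    rw [← Nat.card_coe_set_eq, ← Nat.card_coe_set_eq]
    exact hcard_ge
  rw [hset, hDset]
end

section
/- Suppose a finite group G has a complete Hall σ-set {H_1, ..., H_t} and H is a subgroup of G that is σ-semipermutable with respect to it. If R ⊴ G, and for every prime p dividing |H| a Sylow p-subgroup of H is not contained in R, then HR/R is σ-semipermutable in G/R with respect to the complete Hall σ-set {H_1R/R, ..., H_tR/R}. -/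
open Subgroup Pointwise

variable {G : Type*}

/-- If `H` is σ-semipermutable with respect to the complete Hall σ-set
`{H_1,...,H_t}`, `R ⊴ G` and no Sylow subgroup of `H` lies in `R`, then `HR/R` is
σ-semipermutable in `G/R` with respect to the complete Hall σ-set `{H_1R/R,...,H_tR/R}`. -/
theorem stmt11 {ι : Type*} [Group G] [Finite G] (σ : ι → Set ℕ)
    (hσ : IsPrimePartition σ) {t : ℕ} (ℋ : Fin t → Subgroup G) (j : Fin t → ι)
    (hH : IsCompleteHallSigmaSet σ ℋ j)
    (H : Subgroup G) (hs : SigmaSemipermutable H ℋ)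
    (R : Subgroup G) [hR : R.Normal]
    (hSyl : ∀ p : ℕ, p.Prime → p ∣ Nat.card H →
      ∀ Q : Sylow p H, ¬ (Q : Subgroup H).map H.subtype ≤ R) :
    IsCompleteHallSigmaSet σ (fun i => (ℋ i).map (QuotientGroup.mk' R)) j ∧
    SigmaSemipermutable (H.map (QuotientGroup.mk' R))
      (fun i => (ℋ i).map (QuotientGroup.mk' R)) := by
  classical
  set π := QuotientGroup.mk' R with hπ
  have hsurj : Function.Surjective π := QuotientGroup.mk'_surjective R
  -- cards of images divide cards
  have hcard_map : ∀ K : Subgroup G, Nat.card (K.map π) ∣ Nat.card K := fun K =>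
    Subgroup.card_dvd_of_surjective (π.subgroupMap K) (π.subgroupMap_surjective K)
  -- the key Sylow fact: any prime dividing |H| divides |H.map π|
  have hkey : ∀ p : ℕ, p.Prime → p ∣ Nat.card H → p ∣ Nat.card (H.map π) := by
    intro p hp hpH
    haveI : Fact p.Prime := ⟨hp⟩
    obtain ⟨Q⟩ : Nonempty (Sylow p H) := inferInstance
    have hQ : IsPGroup p ((Q : Subgroup H).map H.subtype) := Q.2.map _
    obtain ⟨g, hg, hgR⟩ : ∃ g ∈ (Q : Subgroup H).map H.subtype, g ∉ R := by
      by_contra h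
      push_neg at h
      exact hSyl p hp hpH Q h
    have hP : IsPGroup p (((Q : Subgroup H).map H.subtype).map π) := hQ.map π
    have hne : (π g : G ⧸ R) ≠ 1 := by
      intro h
      exact hgR (by rwa [← QuotientGroup.ker_mk' R, MonoidHom.mem_ker])
    have hnt : Nontrivial (((Q : Subgroup H).map H.subtype).map π) :=
      (Subgroup.nontrivial_iff_exists_ne_one _).2
        ⟨π g, Subgroup.mem_map_of_mem π hg, hne⟩
    obtain ⟨n, hn0, hcard⟩ := hP.nontrivial_iff_card.mp hnt
    have hple : ((Q : Subgroup H).map H.subtype).map π ≤ H.map π :=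
      Subgroup.map_mono (Subgroup.map_subtype_le _)
    calc p ∣ p ^ n := dvd_pow_self p hn0.ne'
      _ = Nat.card (((Q : Subgroup H).map H.subtype).map π) := hcard.symm
      _ ∣ Nat.card (H.map π) := Subgroup.card_dvd_of_le hple
  -- part 1: complete Hall σ-set
  have hpart1 : IsCompleteHallSigmaSet σ (fun i => (ℋ i).map π) j := by
    refine ⟨hH.1, fun i => ⟨fun q hq hdvd => (hH.2.1 i).1 q hq
      (hdvd.trans (hcard_map (ℋ i))), fun q hq hdvd => (hH.2.1 i).2 q hq
      (hdvd.trans ((ℋ i).index_map_dvd hsurj))⟩, ?_⟩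
    rintro a ⟨q, hq, hqa, hdvd⟩
    exact hH.2.2 a ⟨q, hq, hqa, hdvd.trans (Subgroup.card_quotient_dvd_card R)⟩
  refine ⟨hpart1, ?_⟩
  intro i hcop xbar
  obtain ⟨x, rfl⟩ := hsurj xbar
  -- derive coprimality upstairs
  have hcop' : Nat.Coprime (Nat.card H) (Nat.card (ℋ i)) := by
    by_contra hnc
    obtain ⟨q, hq, hqd⟩ := Nat.exists_prime_and_dvd hnc
    have hqH : q ∣ Nat.card H := hqd.trans (Nat.gcd_dvd_left _ _)
    have hqHi : q ∣ Nat.card (ℋ i) := hqd.trans (Nat.gcd_dvd_right _ _)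
    have h1 : q ∣ Nat.card (H.map π) := hkey q hq hqH
    have hqσ : q ∈ σ (j i) := (hH.2.1 i).1 q hq hqHi
    have hnidx : ¬ q ∣ ((ℋ i).map π).index := by
      intro h
      exact (hH.2.1 i).2 q hq (h.trans ((ℋ i).index_map_dvd hsurj)) hqσ
    have hqG : q ∣ Nat.card (G ⧸ R) :=
      h1.trans (Subgroup.card_subgroup_dvd_card (H.map π))
    rw [← Subgroup.card_mul_index ((ℋ i).map π)] at hqG
    have h2 : q ∣ Nat.card ((ℋ i).map π) :=
      ((Nat.Prime.dvd_mul hq).mp hqG).resolve_right hnidx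
    have : q ∣ 1 := hcop ▸ Nat.dvd_gcd h1 h2
    exact hq.one_lt.ne' (Nat.dvd_one.mp this)
  have hperm := hs i hcop' x
  -- transport permutes through π
  have hsconj : sconj (π x) ((ℋ i).map π) = (sconj x (ℋ i)).map π := by
    unfold sconj
    rw [Subgroup.map_map, Subgroup.map_map]
    refine congrArg (Subgroup.map · (ℋ i)) ?_
    ext g
    simp [MulAut.conj, mul_assoc]
  rw [hsconj]
  unfold permutes at hperm ⊢
  rw [Subgroup.coe_map, Subgroup.coe_map, ← Set.image_mul, ← Set.image_mul, hperm]
end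

section
/- Let {H_1, ..., H_t} be a complete Hall σ-set of a finite group G and H a subgroup of G that is σ-semipermutable with respect to it. If L is a subgroup with H ≤ L ≤ G and {H_1 ∩ L, ..., H_t ∩ L} is a complete Hall σ-set of L, then H is σ-semipermutable in L with respect to {H_1 ∩ L, ..., H_t ∩ L}. -/
open Subgroup Pointwise

variable {G : Type*}

private lemma sconj_subgroupOf [Group G] (K L : Subgroup G) (x : L) :
    sconj x (K.subgroupOf L) = (sconj (x : G) K).subgroupOf L := by
  ext y
  simp only [sconj, Subgroup.mem_map, Subgroup.mem_subgroupOf,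
    MulEquiv.coe_toMonoidHom, MulAut.conj_apply]
  constructor
  · rintro ⟨k, hk, rfl⟩
    exact ⟨(k : G), hk, by push_cast; group⟩
  · rintro ⟨g, hg, hgy⟩
    have hgL : g ∈ L := by
      have : g = (x : G) * (y : G) * (x : G)⁻¹ := by
        rw [← hgy]; group
      rw [this]
      exact mul_mem (mul_mem x.2 y.2) (inv_mem x.2)
    refine ⟨⟨g, hgL⟩, hg, ?_⟩
    ext
    push_cast
    rw [← hgy]

private lemma permutes_subgroupOf [Group G] (A B L : Subgroup G) (hAL : A ≤ L)
    (h : permutes A B) : permutes (A.subgroupOf L) (B.subgroupOf L) := by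
  unfold permutes at h ⊢
  ext z
  simp only [Set.mem_mul, SetLike.mem_coe, Subgroup.mem_subgroupOf]
  constructor
  · rintro ⟨a, ha, b, hb, rfl⟩
    have : (a : G) * (b : G) ∈ (B : Set G) * (A : Set G) := by
      rw [← h]; exact Set.mul_mem_mul ha hb
    obtain ⟨b', hb', a', ha', hba⟩ := this
    have ha'L : a' ∈ L := hAL ha'
    have hb'L : b' ∈ L := by
      have : b' = (a : G) * (b : G) * a'⁻¹ := by rw [← hba]; group
      rw [this]
      exact mul_mem (mul_mem a.2 b.2) (inv_mem ha'L)
    exact ⟨⟨b', hb'L⟩, hb', ⟨a', ha'L⟩, ha', by ext; exact hba⟩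
  · rintro ⟨b, hb, a, ha, rfl⟩
    have : (b : G) * (a : G) ∈ (A : Set G) * (B : Set G) := by
      rw [h]; exact Set.mul_mem_mul hb ha
    obtain ⟨a', ha', b', hb', hab⟩ := this
    have ha'L : a' ∈ L := hAL ha'
    have hb'L : b' ∈ L := by
      have : b' = a'⁻¹ * ((b : G) * (a : G)) := by rw [← hab]; group
      rw [this]
      exact mul_mem (inv_mem ha'L) (mul_mem b.2 a.2)
    exact ⟨⟨a', ha'L⟩, ha', ⟨b', hb'L⟩, hb', by ext; exact hab⟩

/-- If `H` is σ-semipermutable in `G` with respect to `{H_1,...,H_t}`,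
`H ≤ L ≤ G` and `{H_1 ∩ L,...,H_t ∩ L}` is a complete Hall σ-set of `L`, then `H` is
σ-semipermutable in `L` with respect to `{H_1 ∩ L,...,H_t ∩ L}`. -/
theorem stmt12 {ι : Type*} [Group G] [Finite G] (σ : ι → Set ℕ)
    (hσ : IsPrimePartition σ) {t : ℕ} (ℋ : Fin t → Subgroup G) (j : Fin t → ι)
    (hH : IsCompleteHallSigmaSet σ ℋ j)
    (H : Subgroup G) (hs : SigmaSemipermutable H ℋ)
    (L : Subgroup G) (hHL : H ≤ L)
    (hred : IsCompleteHallSigmaSet σ (fun i => (ℋ i).subgroupOf L) j) :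
    SigmaSemipermutable (H.subgroupOf L) (fun i => (ℋ i).subgroupOf L) := by
  intro i hi x
  have hcardeq : Nat.card (H.subgroupOf L) = Nat.card H :=
    Nat.card_congr (Subgroup.subgroupOfEquivOfLe hHL).toEquiv
  have hco : Nat.Coprime (Nat.card H) (Nat.card (ℋ i)) := by
    by_contra hnc
    obtain ⟨p, hp, hpH, hpHi⟩ := Nat.Prime.not_coprime_iff_dvd.mp hnc
    have hpσ : p ∈ σ (j i) := (hH.2.1 i).1 p hp hpHi
    have hpL : p ∣ Nat.card L := hpH.trans (Subgroup.card_dvd_of_le hHL)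
    have hmul : Nat.card ((ℋ i).subgroupOf L) * ((ℋ i).subgroupOf L).index
        = Nat.card L := Subgroup.card_mul_index _
    have hpd : p ∣ Nat.card ((ℋ i).subgroupOf L) := by
      rcases (Nat.Prime.dvd_mul hp).mp (hmul ▸ hpL) with h' | h'
      · exact h'
      · exact absurd hpσ ((hred.2.1 i).2 p hp h')
    have : ¬ Nat.Coprime (Nat.card (H.subgroupOf L))
        (Nat.card ((ℋ i).subgroupOf L)) :=
      Nat.Prime.not_coprime_iff_dvd.mpr ⟨p, hp, hcardeq ▸ hpH, hpd⟩
    exact this hi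
  have hperm := hs i hco (x : G)
  simpa only [sconj_subgroupOf] using
    permutes_subgroupOf H (sconj (x : G) (ℋ i)) L hHL hperm
end
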